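/- arXiv:1910.01633 — 3 statements merged into one kernel-verified Lean document; each statement's English description precedes it below -/
import Mathlib

section
/- Let Q be a connected quiver, k a field, θ : V → ℝ generic with Σ_{i∈V} θ_i = 0, and (x, x*) a θ-stable toric representation of the double quiver of Q. Let e ∈ E, suppose the restriction of (x, x*) to E ∖ {e} is not θ-stable, and suppose every destabilising subset contains t(e) (and hence not h(e)). Let β := min{Σ_{i∈J} θ_i : J destabilising} and define θ' by θ'_{t(e)} = θ_{t(e)} − β, θ'_{h(e)} = θ_{h(e)} + β, θ'_i = θ_i otherwise. Then: (i) there is a unique destabilising subset J₁ with Σ_{i∈J₁} θ_i = β; (ii) Σ_{i∈J₁} θ'_i = 0 and every subset J with ∅ ≠ J ⊊ J₁ that is closed for the restriction of (x, x*) to the edges with both endpoints in J₁ satisfies Σ_{i∈J} θ'_i > 0; (iii) every subset J with ∅ ≠ J ⊊ V ∖ J₁ that is closed for the restriction of (x, x*) to the edges with both endpoints in V ∖ J₁ satisfies Σ_{i∈J} θ'_i > 0. -/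
open Classical Finset

noncomputable section

/-- The equivalence relation on vertices generated by the edges in `D`:
`t e` and `h e` are related for every `e ∈ D`. -/
def joinedRel {V E : Type} (tl hd : E → V) (D : Set E) : V → V → Prop :=
  Relation.EqvGen fun a b => ∃ e ∈ D, (tl e = a ∧ hd e = b) ∨ (tl e = b ∧ hd e = a)

/-- The graph `(V, D)` is connected. -/
def IsConn {V E : Type} (tl hd : E → V) (D : Set E) : Prop :=
  ∀ a b : V, joinedRel tl hd D a b

/-- `T ⊆ E` is a spanning tree: `(V, T)` is connected and `#T = #V - 1`. -/
def IsSpanningTree {V E : Type} [Fintype V] (tl hd : E → V) (T : Finset E) : Prop :=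
  IsConn tl hd ↑T ∧ T.card + 1 = Fintype.card V

/-- The connected component of the vertex `v` in the graph with edge set `D`. -/
def component {V E : Type} [Fintype V] (tl hd : E → V) (D : Finset E) (v : V) : Finset V :=
  Finset.univ.filter fun j => joinedRel tl hd (↑D) v j

/-- Genericity of a stability parameter. -/
def Generic {V : Type} [Fintype V] (θ : V → ℝ) : Prop :=
  ∀ J : Finset V, J.Nonempty → J ≠ Finset.univ → ∑ i ∈ J, θ i ≠ 0

/-- Auxiliary recursion computing the external activity: `S` is the set of remaining
edges and `C` the set of already contracted edges (an edge of the current, partially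
contracted, quiver is a loop iff its endpoints are joined by edges of `C`).  At each
step the largest non-loop edge is contracted (if it lies in `T`) or deleted (otherwise);
once no non-loop edge remains (i.e. the contracted quiver has one vertex), the number of
remaining (loop) edges is returned. -/
def extactAux {V E : Type} [LinearOrder E] (tl hd : E → V) (T : Finset E)
    (S C : Finset E) : ℕ :=
  if hne : (S.filter fun e => ¬ joinedRel tl hd (↑C) (tl e) (hd e)).Nonempty then
    if (S.filter fun e => ¬ joinedRel tl hd (↑C) (tl e) (hd e)).max' hne ∈ T then
      extactAux tl hd T
        (S.erase ((S.filter fun e => ¬ joinedRel tl hd (↑C) (tl e) (hd e)).max' hne))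
        (insert ((S.filter fun e => ¬ joinedRel tl hd (↑C) (tl e) (hd e)).max' hne) C)
    else
      extactAux tl hd T
        (S.erase ((S.filter fun e => ¬ joinedRel tl hd (↑C) (tl e) (hd e)).max' hne)) C
  else S.card
termination_by S.card
decreasing_by
  · exact Finset.card_lt_card (Finset.erase_ssubset
      (Finset.mem_of_mem_filter _ (Finset.max'_mem _ hne)))
  · exact Finset.card_lt_card (Finset.erase_ssubset
      (Finset.mem_of_mem_filter _ (Finset.max'_mem _ hne)))

/-- The external activity `extact(Q, T)` of a spanning tree `T`, with respect to a fixed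
linear order on the edges. -/
def extact {V E : Type} [Fintype E] [LinearOrder E] (tl hd : E → V) (T : Finset E) : ℕ :=
  extactAux tl hd T Finset.univ ∅

/-- Isomorphism of toric representations. -/
def IsoRep {V E k : Type} [Field k] (tl hd : E → V) (x x' : E → k) : Prop :=
  ∃ g : V → kˣ, ∀ e, x' e = (g (hd e) : k) * x e * ((g (tl e) : k))⁻¹

/-- Gauge equivalence (the `(kˣ)^V`-action) for representations of the double quiver. -/
def GaugeEquiv {V E k : Type} [Field k] (tl hd : E → V) (x xs x' xs' : E → k) : Prop :=
  ∃ g : V → kˣ,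
    (∀ e, x' e = (g (hd e) : k) * x e * ((g (tl e) : k))⁻¹) ∧
    (∀ e, xs' e = (g (tl e) : k) * xs e * ((g (hd e) : k))⁻¹)

/-- The moment map equations for the parameter `lam`. -/
def MomentMap {V E k : Type} [Fintype E] [Field k] (tl hd : E → V) (lam : V → k)
    (x xs : E → k) : Prop :=
  ∀ i : V,
    (∑ e ∈ Finset.univ.filter fun e => hd e = i, x e * xs e) -
      (∑ e ∈ Finset.univ.filter fun e => tl e = i, x e * xs e) = lam i

/-- `J` is closed for `(x, xs)`, with only the conditions for edges in `S` imposed. -/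
def ClosedOn {V E k : Type} [Zero k] (tl hd : E → V) (x xs : E → k) (S : Set E)
    (J : Finset V) : Prop :=
  ∀ e ∈ S, (x e ≠ 0 → tl e ∈ J → hd e ∈ J) ∧ (xs e ≠ 0 → hd e ∈ J → tl e ∈ J)

/-- `θ`-stability of `(x, xs)` on the subquiver with vertex set `W` and edge set `S`. -/
def StableSub {V E k : Type} [Zero k] (tl hd : E → V) (θ : V → ℝ) (x xs : E → k)
    (W : Finset V) (S : Set E) : Prop :=
  ∀ J : Finset V, J ⊆ W → ClosedOn tl hd x xs S J → J.Nonempty → J ≠ W →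
    0 < ∑ i ∈ J, θ i

/-- Destabilising subsets for `(x, xs)` on the subquiver `(W, S)`. -/
def DestabSub {V E k : Type} [Zero k] (tl hd : E → V) (θ : V → ℝ) (x xs : E → k)
    (W : Finset V) (S : Set E) (J : Finset V) : Prop :=
  J ⊆ W ∧ J.Nonempty ∧ J ≠ W ∧ ClosedOn tl hd x xs S J ∧ ∑ i ∈ J, θ i ≤ 0

/-- The projection identifying the vertex `a` with the vertex `b`, i.e. the quotient map
`V → V/e` for the contraction of an edge with tail `a` and head `b` (the quotient being
modelled on the subtype of vertices different from `a`). -/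
def cProj {V : Type} (a b : V) (h : b ≠ a) (i : V) : {j : V // j ≠ a} :=
  if hi : i = a then ⟨b, h⟩ else ⟨i, hi⟩

/-- Tail map of the contracted quiver `Q/e`. -/
def contractTl {V E : Type} (tl hd : E → V) (e : E) (h : hd e ≠ tl e)
    (f : {f : E // f ≠ e}) : {j : V // j ≠ tl e} := cProj (tl e) (hd e) h (tl f.1)

/-- Head map of the contracted quiver `Q/e`. -/
def contractHd {V E : Type} (tl hd : E → V) (e : E) (h : hd e ≠ tl e)
    (f : {f : E // f ≠ e}) : {j : V // j ≠ tl e} := cProj (tl e) (hd e) h (hd f.1)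

/-- Contraction `θ/e` (or `λ/e`) of a parameter along the contraction of an edge with
tail `a` and head `b`: the new vertex `ι` (represented by `b`) gets the value
`θ a + θ b`, all other vertices keep their values. -/
def contractParam {V R : Type} [Add R] (a b : V) (θ : V → R) (j : {i : V // i ≠ a}) : R :=
  if (j : V) = b then θ a + θ b else θ (j : V)

/-- The graph of the tree-assignment recursion: `TreeAssign tl hd x xs W S θ T` means
that the recursion, applied to the restriction of `(x, xs)` to the subquiver with vertex
set `W` and edge set `S` and with stability parameter `θ` (and the linear order induced
from `E`), produces the spanning tree `T`. -/
inductive TreeAssign {V E k : Type} [Fintype V] [LinearOrder E] [Zero k]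
    (tl hd : E → V) (x xs : E → k) :
    Finset V → Finset E → (V → ℝ) → Finset E → Prop
  | base (W : Finset V) (S : Finset E) (θ : V → ℝ) (hW : W.card = 1) :
      TreeAssign tl hd x xs W S θ ∅
  | delete (W : Finset V) (S : Finset E) (θ : V → ℝ) (e : E)
      (he : e ∈ S) (hloop : tl e ≠ hd e)
      (hsmall : ∀ f ∈ S, tl f ≠ hd f → e ≤ f)
      (hstab : StableSub tl hd θ x xs W ↑(S.erase e))
      (T : Finset E) (ih : TreeAssign tl hd x xs W (S.erase e) θ T) :
      TreeAssign tl hd x xs W S θ T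
  | contract (W : Finset V) (S : Finset E) (θ : V → ℝ) (e : E) (a b : V)
      (he : e ∈ S) (hloop : tl e ≠ hd e)
      (hsmall : ∀ f ∈ S, tl f ≠ hd f → e ≤ f)
      (hab : (a = tl e ∧ b = hd e) ∨ (a = hd e ∧ b = tl e))
      (J₁ : Finset V)
      (hJ₁ : DestabSub tl hd θ x xs W ↑(S.erase e) J₁)
      (hall : ∀ J, DestabSub tl hd θ x xs W ↑(S.erase e) J → a ∈ J ∧ b ∉ J)
      (hmin : ∀ J, DestabSub tl hd θ x xs W ↑(S.erase e) J →
        ∑ i ∈ J₁, θ i ≤ ∑ i ∈ J, θ i)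
      (T₁ T₂ : Finset E)
      (ih₁ : TreeAssign tl hd x xs J₁ (S.filter fun f => tl f ∈ J₁ ∧ hd f ∈ J₁)
          (fun i => if i = a then θ i - ∑ j ∈ J₁, θ j
            else if i = b then θ i + ∑ j ∈ J₁, θ j else θ i) T₁)
      (ih₂ : TreeAssign tl hd x xs (W \ J₁)
          (S.filter fun f => tl f ∈ W \ J₁ ∧ hd f ∈ W \ J₁)
          (fun i => if i = a then θ i - ∑ j ∈ J₁, θ j
            else if i = b then θ i + ∑ j ∈ J₁, θ j else θ i) T₂) :
      TreeAssign tl hd x xs W S θ (insert e (T₁ ∪ T₂))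

/-- Points of the cell `M_T`: `θ`-stable pairs satisfying the moment map equations whose
assigned spanning tree is `T`. -/
def CellPt {V E k : Type} [Fintype V] [Fintype E] [LinearOrder E] [Field k]
    (tl hd : E → V) (lam : V → k) (θ : V → ℝ) (T : Finset E) : Type :=
  {p : (E → k) × (E → k) //
    StableSub tl hd θ p.1 p.2 Finset.univ Set.univ ∧
    MomentMap tl hd lam p.1 p.2 ∧
    TreeAssign tl hd p.1 p.2 Finset.univ Finset.univ θ T}

/-- The cell `M_T` of the Nakajima orbit set: `(kˣ)^V`-orbits of points. -/
def Cell {V E k : Type} [Fintype V] [Fintype E] [LinearOrder E] [Field k]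
    (tl hd : E → V) (lam : V → k) (θ : V → ℝ) (T : Finset E) : Type :=
  Quot fun p q : CellPt tl hd lam θ T => GaugeEquiv tl hd p.1.1 p.1.2 q.1.1 q.1.2


/-- there is a unique destabilising subset `J₁` attaining the minimum `β`;
`Σ_{J₁} θ' = 0` and the restrictions of `(x, xs)` to the full subquivers on `J₁` and on
`V ∖ J₁` are `θ'`-stable. -/
theorem statement13 {V E : Type} [Fintype V] [Nonempty V] [Fintype E]
    (tl hd : E → V) (hQ : IsConn tl hd Set.univ)
    (k : Type) [Field k]
    (θ : V → ℝ) (hgen : Generic θ) (hθ : ∑ i, θ i = 0)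
    (x xs : E → k)
    (hstab : StableSub tl hd θ x xs Finset.univ Set.univ)
    (e : E)
    (hunst : ¬ StableSub tl hd θ x xs Finset.univ {f | f ≠ e})
    (htl : ∀ J, DestabSub tl hd θ x xs Finset.univ {f | f ≠ e} J → tl e ∈ J)
    (β : ℝ)
    (hβ : β = sInf {s : ℝ | ∃ J, DestabSub tl hd θ x xs Finset.univ {f | f ≠ e} J ∧
      ∑ i ∈ J, θ i = s}) :
    (∃! J₁ : Finset V, DestabSub tl hd θ x xs Finset.univ {f | f ≠ e} J₁ ∧
      ∑ i ∈ J₁, θ i = β) ∧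
    (∀ J₁ : Finset V, DestabSub tl hd θ x xs Finset.univ {f | f ≠ e} J₁ →
      ∑ i ∈ J₁, θ i = β →
      (∑ i ∈ J₁, (if i = tl e then θ i - β else if i = hd e then θ i + β else θ i)
          = 0) ∧
      (∀ J : Finset V, J.Nonempty → J ⊆ J₁ → J ≠ J₁ →
        ClosedOn tl hd x xs {f | tl f ∈ J₁ ∧ hd f ∈ J₁} J →
        0 < ∑ i ∈ J,
          (if i = tl e then θ i - β else if i = hd e then θ i + β else θ i)) ∧
      (∀ J : Finset V, J.Nonempty → J ⊆ J₁ᶜ → J ≠ J₁ᶜ →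
        ClosedOn tl hd x xs {f | tl f ∉ J₁ ∧ hd f ∉ J₁} J →
        0 < ∑ i ∈ J,
          (if i = tl e then θ i - β else if i = hd e then θ i + β else θ i))) := by
  classical
  set D : Finset V → Prop :=
    DestabSub tl hd θ x xs Finset.univ {f | f ≠ e} with hD
  -- existence of a destabilising subset
  have hex : ∃ J, D J := by
    by_contra h
    push_neg at h
    apply hunst
    intro J hJW hJc hJne hJuniv
    by_contra hle
    push_neg at hle
    exact h J ⟨hJW, hJne, hJuniv, hJc, hle⟩
  -- the set of values is finite and nonempty, so β is attained
  have hfin : {s : ℝ | ∃ J, D J ∧ ∑ i ∈ J, θ i = s}.Finite :=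
    Set.Finite.subset (Set.finite_range (fun J : Finset V => ∑ i ∈ J, θ i))
      (by rintro s ⟨J, _, rfl⟩; exact ⟨J, rfl⟩)
  have hsne : {s : ℝ | ∃ J, D J ∧ ∑ i ∈ J, θ i = s}.Nonempty := by
    obtain ⟨J, hJ⟩ := hex
    exact ⟨_, J, hJ, rfl⟩
  have hmem : β ∈ {s : ℝ | ∃ J, D J ∧ ∑ i ∈ J, θ i = s} := by
    rw [hβ]; exact hsne.csInf_mem hfin
  obtain ⟨Jm, hJmD, hJmβ⟩ := hmem
  have hβle : ∀ J, D J → β ≤ ∑ i ∈ J, θ i := by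
    intro J hJ
    rw [hβ]
    exact csInf_le hfin.bddBelow ⟨J, hJ, rfl⟩
  -- destabilising subsets do not contain hd e
  have hhdnot : ∀ J, D J → hd e ∉ J := by
    intro J hJ hmemJ
    have hcl : ClosedOn tl hd x xs Set.univ J := by
      intro f _
      by_cases hf : f = e
      · subst hf
        exact ⟨fun _ _ => hmemJ, fun _ _ => htl J hJ⟩
      · exact hJ.2.2.2.1 f hf
    exact absurd (hstab J (Finset.subset_univ J) hcl hJ.2.1 hJ.2.2.1)
      (not_lt.2 hJ.2.2.2.2)
  have hne : tl e ≠ hd e := by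
    intro h
    exact hhdnot Jm hJmD (h ▸ htl Jm hJmD)
  -- β is negative
  have hβneg : β < 0 := by
    have h0 := hgen Jm hJmD.2.1 hJmD.2.2.1
    rw [hJmβ] at h0
    have := hJmD.2.2.2.2
    rw [hJmβ] at this
    exact lt_of_le_of_ne this h0
  -- closure of unions and intersections
  have hclU : ∀ (S : Set E) (J₁ J₂ : Finset V), ClosedOn tl hd x xs S J₁ →
      ClosedOn tl hd x xs S J₂ → ClosedOn tl hd x xs S (J₁ ∪ J₂) := by
    intro S J₁ J₂ h1 h2 f hf
    refine ⟨fun hx htlf => ?_, fun hxs hhdf => ?_⟩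
    · rcases Finset.mem_union.1 htlf with h | h
      · exact Finset.mem_union_left _ ((h1 f hf).1 hx h)
      · exact Finset.mem_union_right _ ((h2 f hf).1 hx h)
    · rcases Finset.mem_union.1 hhdf with h | h
      · exact Finset.mem_union_left _ ((h1 f hf).2 hxs h)
      · exact Finset.mem_union_right _ ((h2 f hf).2 hxs h)
  have hclI : ∀ (S : Set E) (J₁ J₂ : Finset V), ClosedOn tl hd x xs S J₁ →
      ClosedOn tl hd x xs S J₂ → ClosedOn tl hd x xs S (J₁ ∩ J₂) := by
    intro S J₁ J₂ h1 h2 f hf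
    refine ⟨fun hx htlf => ?_, fun hxs hhdf => ?_⟩
    · exact Finset.mem_inter.2 ⟨(h1 f hf).1 hx (Finset.mem_inter.1 htlf).1,
        (h2 f hf).1 hx (Finset.mem_inter.1 htlf).2⟩
    · exact Finset.mem_inter.2 ⟨(h1 f hf).2 hxs (Finset.mem_inter.1 hhdf).1,
        (h2 f hf).2 hxs (Finset.mem_inter.1 hhdf).2⟩
  -- summation of the modified parameter
  have hsum : ∀ J : Finset V,
      ∑ i ∈ J, (if i = tl e then θ i - β else if i = hd e then θ i + β else θ i)
        = ∑ i ∈ J, θ i +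
          ((if tl e ∈ J then -β else 0) + (if hd e ∈ J then β else 0)) := by
    intro J
    have hcon : ∀ i ∈ J,
        (if i = tl e then θ i - β else if i = hd e then θ i + β else θ i)
          = θ i + ((if i = tl e then -β else 0) + (if i = hd e then β else 0)) := by
      intro i _
      by_cases h1 : i = tl e
      · subst h1
        simp [hne]
        ring
      · by_cases h2 : i = hd e
        · subst h2
          simp [Ne.symm hne]
        · simp [h1, h2]
    rw [Finset.sum_congr rfl hcon, Finset.sum_add_distrib, Finset.sum_add_distrib]
    congr 1
    congr 1
    · simp [Finset.sum_ite_eq' J (tl e) (fun _ => -β)]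
    · simp [Finset.sum_ite_eq' J (hd e) (fun _ => β)]
  -- uniqueness of the minimiser
  have huniq : ∀ J₁ J₂, D J₁ → D J₂ → ∑ i ∈ J₁, θ i = β → ∑ i ∈ J₂, θ i = β →
      J₁ = J₂ := by
    intro J₁ J₂ h1 h2 hs1 hs2
    have htl1 : tl e ∈ J₁ := htl _ h1
    have htl2 : tl e ∈ J₂ := htl _ h2
    have hhd1 : hd e ∉ J₁ := hhdnot _ h1
    have hhd2 : hd e ∉ J₂ := hhdnot _ h2
    have hIcl : ClosedOn tl hd x xs {f | f ≠ e} (J₁ ∩ J₂) :=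
      hclI _ _ _ h1.2.2.2.1 h2.2.2.2.1
    have hUcl : ClosedOn tl hd x xs {f | f ≠ e} (J₁ ∪ J₂) :=
      hclU _ _ _ h1.2.2.2.1 h2.2.2.2.1
    have hIne : (J₁ ∩ J₂).Nonempty := ⟨tl e, Finset.mem_inter.2 ⟨htl1, htl2⟩⟩
    have hUne : (J₁ ∪ J₂).Nonempty := ⟨tl e, Finset.mem_union_left _ htl1⟩
    have hhdU : hd e ∉ J₁ ∪ J₂ := by
      simp [Finset.mem_union, hhd1, hhd2]
    have hhdI : hd e ∉ J₁ ∩ J₂ := by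
      simp [Finset.mem_inter, hhd1]
    have hInu : J₁ ∩ J₂ ≠ Finset.univ := by
      intro h; exact hhdI (h ▸ Finset.mem_univ (hd e))
    have hUnu : J₁ ∪ J₂ ≠ Finset.univ := by
      intro h; exact hhdU (h ▸ Finset.mem_univ (hd e))
    have hsum2 : ∑ i ∈ J₁ ∪ J₂, θ i + ∑ i ∈ J₁ ∩ J₂, θ i = β + β := by
      rw [Finset.sum_union_inter, hs1, hs2]
    have hIβ : ∑ i ∈ J₁ ∩ J₂, θ i = β := by
      by_cases hI : ∑ i ∈ J₁ ∩ J₂, θ i ≤ 0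
      · have hDI : D (J₁ ∩ J₂) :=
          ⟨Finset.subset_univ _, hIne, hInu, hIcl, hI⟩
        have hb1 : β ≤ ∑ i ∈ J₁ ∩ J₂, θ i := hβle _ hDI
        have hDU : D (J₁ ∪ J₂) :=
          ⟨Finset.subset_univ _, hUne, hUnu, hUcl, by linarith⟩
        have hb2 : β ≤ ∑ i ∈ J₁ ∪ J₂, θ i := hβle _ hDU
        linarith
      · push_neg at hI
        have hDU : D (J₁ ∪ J₂) :=
          ⟨Finset.subset_univ _, hUne, hUnu, hUcl, by linarith⟩
        have hb2 : β ≤ ∑ i ∈ J₁ ∪ J₂, θ i := hβle _ hDU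
        linarith
    have hsd1 : ∑ i ∈ J₁ \ (J₁ ∩ J₂), θ i = 0 := by
      have := Finset.sum_sdiff (Finset.inter_subset_left : J₁ ∩ J₂ ⊆ J₁)
        (f := θ)
      rw [hIβ, hs1] at this
      linarith
    have hsd2 : ∑ i ∈ J₂ \ (J₁ ∩ J₂), θ i = 0 := by
      have := Finset.sum_sdiff (Finset.inter_subset_right : J₁ ∩ J₂ ⊆ J₂)
        (f := θ)
      rw [hIβ, hs2] at this
      linarith
    have h12 : J₁ ⊆ J₂ := by
      by_contra hc
      have hne12 : (J₁ \ (J₁ ∩ J₂)).Nonempty := by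
        rw [Finset.sdiff_inter_self_left, Finset.sdiff_nonempty]
        exact hc
      have hnu12 : J₁ \ (J₁ ∩ J₂) ≠ Finset.univ := by
        intro h
        have : hd e ∈ J₁ \ (J₁ ∩ J₂) := h ▸ Finset.mem_univ (hd e)
        exact hhd1 (Finset.mem_sdiff.1 this).1
      exact hgen _ hne12 hnu12 hsd1
    have h21 : J₂ ⊆ J₁ := by
      by_contra hc
      have hne21 : (J₂ \ (J₁ ∩ J₂)).Nonempty := by
        rw [Finset.inter_comm, Finset.sdiff_inter_self_left, Finset.sdiff_nonempty]
        exact hc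
      have hnu21 : J₂ \ (J₁ ∩ J₂) ≠ Finset.univ := by
        intro h
        have : hd e ∈ J₂ \ (J₁ ∩ J₂) := h ▸ Finset.mem_univ (hd e)
        exact hhd2 (Finset.mem_sdiff.1 this).1
      exact hgen _ hne21 hnu21 hsd2
    exact Finset.Subset.antisymm h12 h21
  constructor
  · exact ⟨Jm, ⟨hJmD, hJmβ⟩, fun J hJ => huniq J Jm hJ.1 hJmD hJ.2 hJmβ⟩
  · intro J₁ hJ₁ hJ₁β
    have htl1 : tl e ∈ J₁ := htl _ hJ₁
    have hhd1 : hd e ∉ J₁ := hhdnot _ hJ₁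
    refine ⟨?_, ?_, ?_⟩
    · rw [hsum J₁, hJ₁β]
      simp [htl1, hhd1]
    · -- stability on the subquiver J₁
      intro J hJne hJsub hJneq hJcl
      have hJcl' : ClosedOn tl hd x xs {f | f ≠ e} J := by
        intro f hf
        have h1 := hJ₁.2.2.2.1 f hf
        constructor
        · intro hx htlJ
          have ht1 : tl f ∈ J₁ := hJsub htlJ
          have hh1 : hd f ∈ J₁ := h1.1 hx ht1
          exact (hJcl f ⟨ht1, hh1⟩).1 hx htlJ
        · intro hxs hhdJ
          have hh1 : hd f ∈ J₁ := hJsub hhdJ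
          have ht1 : tl f ∈ J₁ := h1.2 hxs hh1
          exact (hJcl f ⟨ht1, hh1⟩).2 hxs hhdJ
      have hhdJ : hd e ∉ J := fun h => hhd1 (hJsub h)
      have hJnu : J ≠ Finset.univ := by
        intro h; exact hhdJ (h ▸ Finset.mem_univ (hd e))
      rw [hsum J]
      by_cases htlJ : tl e ∈ J
      · simp only [htlJ, hhdJ, if_true, if_false]
        have hβlt : β < ∑ i ∈ J, θ i := by
          by_cases hJle : ∑ i ∈ J, θ i ≤ 0
          · have hDJ : D J :=
              ⟨Finset.subset_univ _, hJne, hJnu, hJcl', hJle⟩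
            have h1 : β ≤ ∑ i ∈ J, θ i := hβle _ hDJ
            rcases lt_or_eq_of_le h1 with h | h
            · exact h
            · exact absurd (huniq J J₁ hDJ hJ₁ h.symm hJ₁β) hJneq
          · push_neg at hJle
            linarith
        linarith
      · simp only [htlJ, hhdJ, if_false]
        have hclu : ClosedOn tl hd x xs Set.univ J := by
          intro f _
          by_cases hf : f = e
          · subst hf
            exact ⟨fun _ h => absurd h htlJ, fun _ h => absurd h hhdJ⟩
          · exact hJcl' f hf
        have := hstab J (Finset.subset_univ J) hclu hJne hJnu
        linarith
    · -- stability on the complementary subquiver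
      intro J hJne hJsub hJneq hJcl
      have htlJ : tl e ∉ J := fun h => (Finset.mem_compl.1 (hJsub h)) htl1
      have hJnu : J ≠ Finset.univ := by
        intro h; exact htlJ (h ▸ Finset.mem_univ (tl e))
      have hUcl : ClosedOn tl hd x xs {f | f ≠ e} (J ∪ J₁) := by
        intro f hf
        have h1 := hJ₁.2.2.2.1 f hf
        constructor
        · intro hx htlU
          rcases Finset.mem_union.1 htlU with h | h
          · have ht' : tl f ∉ J₁ := Finset.mem_compl.1 (hJsub h)
            by_cases hh' : hd f ∈ J₁
            · exact Finset.mem_union_right _ hh'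
            · exact Finset.mem_union_left _ ((hJcl f ⟨ht', hh'⟩).1 hx h)
          · exact Finset.mem_union_right _ (h1.1 hx h)
        · intro hxs hhdU
          rcases Finset.mem_union.1 hhdU with h | h
          · have hh' : hd f ∉ J₁ := Finset.mem_compl.1 (hJsub h)
            by_cases ht' : tl f ∈ J₁
            · exact Finset.mem_union_right _ ht'
            · exact Finset.mem_union_left _ ((hJcl f ⟨ht', hh'⟩).2 hxs h)
          · exact Finset.mem_union_right _ (h1.2 hxs h)
      have hUne : (J ∪ J₁).Nonempty := ⟨tl e, Finset.mem_union_right _ htl1⟩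
      have hUnu : J ∪ J₁ ≠ Finset.univ := by
        obtain ⟨v, hv1, hv2⟩ := Finset.exists_of_ssubset
          (Finset.ssubset_iff_subset_ne.2 ⟨hJsub, hJneq⟩)
        intro h
        have hvU : v ∈ J ∪ J₁ := h ▸ Finset.mem_univ v
        rcases Finset.mem_union.1 hvU with hv | hv
        · exact hv2 hv
        · exact (Finset.mem_compl.1 hv1) hv
      have hdisj : Disjoint J J₁ :=
        Finset.disjoint_left.2 fun a ha => Finset.mem_compl.1 (hJsub ha)
      have hUsum : ∑ i ∈ J ∪ J₁, θ i = ∑ i ∈ J, θ i + β := by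
        rw [Finset.sum_union hdisj, hJ₁β]
      rw [hsum J]
      by_cases hhdJ : hd e ∈ J
      · simp only [hhdJ, htlJ, if_true, if_false]
        have hclu : ClosedOn tl hd x xs Set.univ (J ∪ J₁) := by
          intro f _
          by_cases hf : f = e
          · subst hf
            exact ⟨fun _ _ => Finset.mem_union_left _ hhdJ,
              fun _ _ => Finset.mem_union_right _ htl1⟩
          · exact hUcl f hf
        have := hstab (J ∪ J₁) (Finset.subset_univ _) hclu hUne hUnu
        linarith
      · simp only [hhdJ, htlJ, if_false]
        by_contra hc
        push_neg at hc
        have hne0 := hgen J hJne hJnu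
        have hc' : ∑ i ∈ J, θ i ≤ 0 := by linarith
        have hlt : ∑ i ∈ J, θ i < 0 := lt_of_le_of_ne hc' hne0
        have hDU : D (J ∪ J₁) :=
          ⟨Finset.subset_univ _, hUne, hUnu, hUcl, by linarith⟩
        have := hβle _ hDU
        linarith

end
end

section
/- Let Q be a connected quiver with a linear order on E, k a field, and θ : V → ℝ generic with Σ_{i∈V} θ_i = 0. For every θ-stable toric representation (x, x*) of the double quiver of Q, the tree-assignment recursion is well defined and produces a spanning tree T = 𝑇(x, x*) of Q; moreover, for every e ∈ T: if e is θ-forward then x_e ≠ 0, and if e is θ-backward then x*_e ≠ 0. -/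
open Classical Finset

noncomputable section

namespace S14Aux

lemma joined_mono {V E : Type} {tl hd : E → V} {D D' : Set E} (h : D ⊆ D') :
    ∀ {a b : V}, joinedRel tl hd D a b → joinedRel tl hd D' a b := by
  intro a b hj
  induction hj with
  | rel a b hab =>
      obtain ⟨e, he, h2⟩ := hab
      exact Relation.EqvGen.rel _ _ ⟨e, h he, h2⟩
  | refl a => exact Relation.EqvGen.refl a
  | symm a b _ ih => exact Relation.EqvGen.symm a b ih
  | trans a b c _ _ ih1 ih2 => exact Relation.EqvGen.trans a b c ih1 ih2

lemma joined_sat {V E : Type} {tl hd : E → V} {D : Set E} {A : Finset V}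
    (hA : ∀ f ∈ D, (tl f ∈ A ↔ hd f ∈ A)) :
    ∀ {a b : V}, joinedRel tl hd D a b → (a ∈ A ↔ b ∈ A) := by
  intro a b hj
  induction hj with
  | rel a b hab =>
      obtain ⟨e, he, h2⟩ := hab
      rcases h2 with ⟨h1, h2⟩ | ⟨h1, h2⟩
      · rw [← h1, ← h2]; exact hA e he
      · rw [← h1, ← h2]; exact (hA e he).symm
  | refl a => exact Iff.rfl
  | symm a b _ ih => exact ih.symm
  | trans a b c _ _ ih1 ih2 => exact ih1.trans ih2

lemma mem_component {V E : Type} [Fintype V] {tl hd : E → V} {D : Finset E} {v w : V} :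
    w ∈ component tl hd D v ↔ joinedRel tl hd (↑D) v w := by
  simp [component]

lemma component_sat {V E : Type} [Fintype V] {tl hd : E → V} {D : Finset E} (v : V) :
    ∀ f ∈ D, (tl f ∈ component tl hd D v ↔ hd f ∈ component tl hd D v) := by
  intro f hf
  have h : joinedRel tl hd (↑D) (tl f) (hd f) :=
    Relation.EqvGen.rel _ _ ⟨f, hf, Or.inl ⟨rfl, rfl⟩⟩
  simp only [mem_component]
  constructor
  · intro h1; exact Relation.EqvGen.trans _ _ _ h1 h
  · intro h1; exact Relation.EqvGen.trans _ _ _ h1 (Relation.EqvGen.symm _ _ h)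

lemma self_mem_component {V E : Type} [Fintype V] {tl hd : E → V} {D : Finset E} {v : V} :
    v ∈ component tl hd D v := mem_component.2 (Relation.EqvGen.refl v)

lemma component_eq {V E : Type} [Fintype V] {tl hd : E → V} {D : Finset E} {v : V}
    (K : Finset V) (hv : v ∈ K)
    (hsat : ∀ f ∈ D, (tl f ∈ K ↔ hd f ∈ K))
    (hjoin : ∀ w ∈ K, joinedRel tl hd (↑D) v w) :
    component tl hd D v = K := by
  ext w
  rw [mem_component]
  constructor
  · intro hj
    have := joined_sat (A := K) (fun f hf => hsat f hf) hj
    exact this.1 hv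
  · exact hjoin w

lemma closed_inter {V E k : Type} [Zero k] {tl hd : E → V} {x xs : E → k} {S : Set E}
    {J J' : Finset V} (h1 : ClosedOn tl hd x xs S J) (h2 : ClosedOn tl hd x xs S J') :
    ClosedOn tl hd x xs S (J ∩ J') := by
  intro e he
  refine ⟨fun hx ht => ?_, fun hx ht => ?_⟩ <;> rw [Finset.mem_inter] at *
  · exact ⟨(h1 e he).1 hx ht.1, (h2 e he).1 hx ht.2⟩
  · exact ⟨(h1 e he).2 hx ht.1, (h2 e he).2 hx ht.2⟩

lemma closed_union {V E k : Type} [Zero k] {tl hd : E → V} {x xs : E → k} {S : Set E}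
    {J J' : Finset V} (h1 : ClosedOn tl hd x xs S J) (h2 : ClosedOn tl hd x xs S J') :
    ClosedOn tl hd x xs S (J ∪ J') := by
  intro e he
  refine ⟨fun hx ht => ?_, fun hx ht => ?_⟩ <;> rw [Finset.mem_union] at *
  · rcases ht with ht | ht
    · exact Or.inl ((h1 e he).1 hx ht)
    · exact Or.inr ((h2 e he).1 hx ht)
  · rcases ht with ht | ht
    · exact Or.inl ((h1 e he).2 hx ht)
    · exact Or.inr ((h2 e he).2 hx ht)

lemma closed_mono {V E k : Type} [Zero k] {tl hd : E → V} {x xs : E → k} {S S' : Set E}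
    {J : Finset V} (hS : S' ⊆ S) (h1 : ClosedOn tl hd x xs S J) :
    ClosedOn tl hd x xs S' J := fun e he => h1 e (hS he)

/-- Genericity restricted to a vertex subset `W`. -/
def GenericOn {V : Type} (W : Finset V) (θ : V → ℝ) : Prop :=
  ∀ J : Finset V, J ⊆ W → J.Nonempty → J ≠ W → ∑ i ∈ J, θ i ≠ 0

lemma GenericOn.eq_empty {V : Type} {W J : Finset V} {θ : V → ℝ} (hgen : GenericOn W θ)
    (hJW : J ⊆ W) (hne : J ≠ W) (h0 : ∑ i ∈ J, θ i = 0) : J = ∅ := by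
  by_contra h
  exact hgen J hJW (Finset.nonempty_iff_ne_empty.2 h) hne h0

lemma sum_theta' {V : Type} (θ : V → ℝ) (a b : V) (hab : a ≠ b) (β : ℝ) (K : Finset V) :
    ∑ i ∈ K, (if i = a then θ i - β else if i = b then θ i + β else θ i)
      = ∑ i ∈ K, θ i - (if a ∈ K then β else 0) + (if b ∈ K then β else 0) := by
  have hfun : ∀ i, (if i = a then θ i - β else if i = b then θ i + β else θ i)
      = θ i + ((if i = a then -β else 0) + (if i = b then β else 0)) := by
    intro i
    by_cases hia : i = a
    · subst hia
      simp [hab]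
      ring
    · by_cases hib : i = b
      · subst hib; simp [Ne.symm hab, hia]
      · simp [hia, hib]
  rw [Finset.sum_congr rfl (fun i _ => hfun i), Finset.sum_add_distrib,
    Finset.sum_add_distrib, Finset.sum_ite_eq' K a (fun _ => -β),
    Finset.sum_ite_eq' K b (fun _ => β)]
  by_cases ha : a ∈ K <;> by_cases hb : b ∈ K <;> simp [ha, hb] <;> ring

end S14Aux


namespace S14Aux

section Step

variable {V E k : Type} [Fintype V] [LinearOrder E] [Zero k]
variable {tl hd : E → V} {x xs : E → k} {θ : V → ℝ} {W : Finset V} {S : Finset E} {e : E}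

lemma mem_coe_erase {f : E} (hf : f ∈ S) (hfe : f ≠ e) : f ∈ (↑(S.erase e) : Set E) :=
  Finset.mem_coe.2 (Finset.mem_erase.2 ⟨hfe, hf⟩)

lemma one_endpoint (hstabS : StableSub tl hd θ x xs W ↑S) (he : e ∈ S)
    {J : Finset V} (hJ : DestabSub tl hd θ x xs W ↑(S.erase e) J) :
    (tl e ∈ J ∧ hd e ∉ J) ∨ (hd e ∈ J ∧ tl e ∉ J) := by
  obtain ⟨hJW, hJne, hJneW, hJcl, hJsum⟩ := hJ
  by_contra h
  push_neg at h
  obtain ⟨h1, h2⟩ := h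
  have hcl : ClosedOn tl hd x xs (↑S) J := by
    intro f hf
    rw [Finset.mem_coe] at hf
    by_cases hfe : f = e
    · subst hfe
      exact ⟨fun _ ht => h1 ht, fun _ ht => h2 ht⟩
    · exact hJcl f (mem_coe_erase hf hfe)
  have := hstabS J hJW hcl hJne hJneW
  linarith

lemma same_endpoint (hstabS : StableSub tl hd θ x xs W ↑S) (he : e ∈ S)
    (hgen : GenericOn W θ) (hsum : ∑ i ∈ W, θ i = 0)
    {J J' : Finset V} (hJ : DestabSub tl hd θ x xs W ↑(S.erase e) J)
    (hJ' : DestabSub tl hd θ x xs W ↑(S.erase e) J')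
    (ht : tl e ∈ J) : tl e ∈ J' := by
  by_contra hcon
  have h1 := one_endpoint hstabS he hJ
  have h2 := one_endpoint hstabS he hJ'
  have htJ : tl e ∈ J ∧ hd e ∉ J := by
    rcases h1 with h | h
    · exact h
    · exact absurd ht h.2
  have hhJ' : hd e ∈ J' ∧ tl e ∉ J' := by
    rcases h2 with h | h
    · exact absurd h.1 hcon
    · exact h
  obtain ⟨hJW, hJne, hJneW, hJcl, hJsum⟩ := hJ
  obtain ⟨hJW', hJne', hJneW', hJcl', hJsum'⟩ := hJ'
  -- intersection and union are closed for all of S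
  have hclInter : ClosedOn tl hd x xs (↑S) (J ∩ J') := by
    intro f hf
    rw [Finset.mem_coe] at hf
    by_cases hfe : f = e
    · subst hfe
      constructor
      · intro _ htl
        exact absurd (Finset.mem_inter.1 htl).2 hhJ'.2
      · intro _ hh
        exact absurd (Finset.mem_inter.1 hh).1 htJ.2
    · exact closed_inter hJcl hJcl' f (mem_coe_erase hf hfe)
  have hclUnion : ClosedOn tl hd x xs (↑S) (J ∪ J') := by
    intro f hf
    rw [Finset.mem_coe] at hf
    by_cases hfe : f = e
    · subst hfe
      constructor
      · intro _ _
        exact Finset.mem_union.2 (Or.inr hhJ'.1)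
      · intro _ _
        exact Finset.mem_union.2 (Or.inl htJ.1)
    · exact closed_union hJcl hJcl' f (mem_coe_erase hf hfe)
  have hsum_ui : ∑ i ∈ J ∪ J', θ i + ∑ i ∈ J ∩ J', θ i = ∑ i ∈ J, θ i + ∑ i ∈ J', θ i :=
    Finset.sum_union_inter
  have hJlt : ∑ i ∈ J, θ i < 0 :=
    lt_of_le_of_ne hJsum (hgen J hJW hJne hJneW)
  have hJlt' : ∑ i ∈ J', θ i < 0 :=
    lt_of_le_of_ne hJsum' (hgen J' hJW' hJne' hJneW')
  have hInterNonneg : 0 ≤ ∑ i ∈ J ∩ J', θ i := by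
    rcases Finset.eq_empty_or_nonempty (J ∩ J') with hE | hNE
    · rw [hE, Finset.sum_empty]
    · have hneW : J ∩ J' ≠ W := by
        intro hEq
        have : hd e ∈ J ∩ J' := by
          rw [hEq]
          exact hJW' hhJ'.1
        exact htJ.2 (Finset.mem_inter.1 this).1
      exact le_of_lt (hstabS (J ∩ J') (le_trans inter_subset_left hJW) hclInter hNE hneW)
  have hUnionPos : 0 < ∑ i ∈ J ∪ J', θ i ∨ J ∪ J' = W := by
    by_cases hEq : J ∪ J' = W
    · exact Or.inr hEq
    · exact Or.inl (hstabS (J ∪ J') (Finset.union_subset hJW hJW') hclUnion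
        (hJne.mono Finset.subset_union_left) hEq)
  rcases hUnionPos with hpos | hEq
  · linarith
  · rw [hEq, hsum] at hsum_ui
    linarith

lemma destab_endpoints (he : e ∈ S)
    {a b : V} (hab : (a = tl e ∧ b = hd e) ∨ (a = hd e ∧ b = tl e)) :
    ((tl e = a ∧ hd e = b) ∨ (tl e = b ∧ hd e = a)) := by
  rcases hab with ⟨h1, h2⟩ | ⟨h1, h2⟩
  · exact Or.inl ⟨h1.symm, h2.symm⟩
  · exact Or.inr ⟨h2.symm, h1.symm⟩

end Step

end S14Aux


namespace S14Aux

section Step2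

variable {V E k : Type} [Fintype V] [LinearOrder E] [Zero k]
variable {tl hd : E → V} {x xs : E → k} {θ : V → ℝ} {W : Finset V} {S : Finset E} {e : E}
variable {a b : V} {J₁ : Finset V}

lemma closed_lift₁ (hJ₁cl : ClosedOn tl hd x xs (↑(S.erase e)) J₁) {J : Finset V}
    (hJJ₁ : J ⊆ J₁)
    (hJcl : ClosedOn tl hd x xs (↑(S.filter fun f => tl f ∈ J₁ ∧ hd f ∈ J₁)) J) :
    ClosedOn tl hd x xs (↑(S.erase e)) J := by
  intro f hf
  have hfS : f ∈ S := Finset.mem_of_mem_erase (Finset.mem_coe.1 hf)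
  constructor
  · intro hx ht
    have ht₁ : tl f ∈ J₁ := hJJ₁ ht
    have hh₁ : hd f ∈ J₁ := (hJ₁cl f hf).1 hx ht₁
    have hfF : f ∈ (↑(S.filter fun f => tl f ∈ J₁ ∧ hd f ∈ J₁) : Set E) :=
      Finset.mem_coe.2 (Finset.mem_filter.2 ⟨hfS, ht₁, hh₁⟩)
    exact (hJcl f hfF).1 hx ht
  · intro hx ht
    have hh₁ : hd f ∈ J₁ := hJJ₁ ht
    have ht₁ : tl f ∈ J₁ := (hJ₁cl f hf).2 hx hh₁
    have hfF : f ∈ (↑(S.filter fun f => tl f ∈ J₁ ∧ hd f ∈ J₁) : Set E) :=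
      Finset.mem_coe.2 (Finset.mem_filter.2 ⟨hfS, ht₁, hh₁⟩)
    exact (hJcl f hfF).2 hx ht

lemma closed_lift₂ (hEnd : ∀ f ∈ S, tl f ∈ W ∧ hd f ∈ W)
    (hJ₁cl : ClosedOn tl hd x xs (↑(S.erase e)) J₁) {J : Finset V}
    (hJW : J ⊆ W \ J₁)
    (hJcl : ClosedOn tl hd x xs (↑(S.filter fun f => tl f ∈ W \ J₁ ∧ hd f ∈ W \ J₁)) J) :
    ClosedOn tl hd x xs (↑(S.erase e)) (J ∪ J₁) := by
  intro f hf
  have hfS : f ∈ S := Finset.mem_of_mem_erase (Finset.mem_coe.1 hf)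
  constructor
  · intro hx ht
    rcases Finset.mem_union.1 ht with htJ | htJ₁
    · by_cases hh₁ : hd f ∈ J₁
      · exact Finset.mem_union.2 (Or.inr hh₁)
      · have htW : tl f ∈ W \ J₁ := hJW htJ
        have hhW : hd f ∈ W \ J₁ := Finset.mem_sdiff.2 ⟨(hEnd f hfS).2, hh₁⟩
        have hfF : f ∈ (↑(S.filter fun f => tl f ∈ W \ J₁ ∧ hd f ∈ W \ J₁) : Set E) :=
          Finset.mem_coe.2 (Finset.mem_filter.2 ⟨hfS, htW, hhW⟩)
        exact Finset.mem_union.2 (Or.inl ((hJcl f hfF).1 hx htJ))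
    · exact Finset.mem_union.2 (Or.inr ((hJ₁cl f hf).1 hx htJ₁))
  · intro hx hh
    rcases Finset.mem_union.1 hh with hhJ | hhJ₁
    · by_cases ht₁ : tl f ∈ J₁
      · exact Finset.mem_union.2 (Or.inr ht₁)
      · have hhW : hd f ∈ W \ J₁ := hJW hhJ
        have htW : tl f ∈ W \ J₁ := Finset.mem_sdiff.2 ⟨(hEnd f hfS).1, ht₁⟩
        have hfF : f ∈ (↑(S.filter fun f => tl f ∈ W \ J₁ ∧ hd f ∈ W \ J₁) : Set E) :=
          Finset.mem_coe.2 (Finset.mem_filter.2 ⟨hfS, htW, hhW⟩)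
        exact Finset.mem_union.2 (Or.inl ((hJcl f hfF).2 hx hhJ))
    · exact Finset.mem_union.2 (Or.inr ((hJ₁cl f hf).2 hx hhJ₁))

/-- facts coming with a minimal destabilising subset -/
lemma sub_stable
    (hEnd : ∀ f ∈ S, tl f ∈ W ∧ hd f ∈ W)
    (hgen : GenericOn W θ) (hsum : ∑ i ∈ W, θ i = 0)
    (hstabS : StableSub tl hd θ x xs W ↑S) (he : e ∈ S)
    (hab : (a = tl e ∧ b = hd e) ∨ (a = hd e ∧ b = tl e))
    (hJ₁ : DestabSub tl hd θ x xs W ↑(S.erase e) J₁)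
    (haJ : a ∈ J₁) (hbJ : b ∉ J₁)
    (hmin : ∀ J, DestabSub tl hd θ x xs W ↑(S.erase e) J → ∑ i ∈ J₁, θ i ≤ ∑ i ∈ J, θ i) :
    StableSub tl hd
      (fun i => if i = a then θ i - ∑ j ∈ J₁, θ j
        else if i = b then θ i + ∑ j ∈ J₁, θ j else θ i) x xs
      J₁ (↑(S.filter fun f => tl f ∈ J₁ ∧ hd f ∈ J₁)) ∧
    StableSub tl hd
      (fun i => if i = a then θ i - ∑ j ∈ J₁, θ j
        else if i = b then θ i + ∑ j ∈ J₁, θ j else θ i) x xs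
      (W \ J₁) (↑(S.filter fun f => tl f ∈ W \ J₁ ∧ hd f ∈ W \ J₁)) := by
  obtain ⟨hJW, hJne, hJneW, hJcl, hJsum⟩ := hJ₁
  set β := ∑ j ∈ J₁, θ j with hβ
  have hweW : ∃ w ∈ W, w ∉ J₁ := Finset.exists_of_ssubset (hJW.ssubset_of_ne hJneW)
  have habne : a ≠ b := by
    intro hEq
    exact hbJ (hEq ▸ haJ)
  have haW : a ∈ W := hJW haJ
  have hbW : b ∈ W := by
    rcases hab with ⟨_, h2⟩ | ⟨_, h2⟩
    · rw [h2]; exact (hEnd e he).2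
    · rw [h2]; exact (hEnd e he).1
  constructor
  · -- stability on J₁
    intro J hJJ₁ hJcl' hJne' hJneJ₁
    have hbJ' : b ∉ J := fun h => hbJ (hJJ₁ h)
    have hJWsub : J ⊆ W := hJJ₁.trans hJW
    have hJneW' : J ≠ W := by
      intro hEq
      exact hJneW (le_antisymm hJW (hEq ▸ hJJ₁))
    have hclE : ClosedOn tl hd x xs (↑(S.erase e)) J := closed_lift₁ hJcl hJJ₁ hJcl'
    rw [sum_theta' θ a b habne β J]
    simp only [if_neg hbJ', add_zero]
    by_cases haJ' : a ∈ J
    · rw [if_pos haJ']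
      by_cases hpos : 0 < ∑ i ∈ J, θ i
      · have : β ≤ 0 := hJsum
        linarith
      · have hdestab : DestabSub tl hd θ x xs W ↑(S.erase e) J :=
          ⟨hJWsub, hJne', hJneW', hclE, not_lt.1 hpos⟩
        have hle : β ≤ ∑ i ∈ J, θ i := hmin J hdestab
        have hsd : ∑ i ∈ J₁ \ J, θ i + ∑ i ∈ J, θ i = β := Finset.sum_sdiff hJJ₁
        have hsdne : (J₁ \ J).Nonempty := by
          rw [Finset.sdiff_nonempty]
          intro hsub
          exact hJneJ₁ (le_antisymm hJJ₁ hsub)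
        have hsdneW : J₁ \ J ≠ W := by
          intro hEq
          have : a ∈ J₁ \ J := hEq ▸ haW
          exact (Finset.mem_sdiff.1 this).2 haJ'
        have hne0 : ∑ i ∈ J₁ \ J, θ i ≠ 0 :=
          hgen _ ((Finset.sdiff_subset).trans hJW) hsdne hsdneW
        have : β < ∑ i ∈ J, θ i := lt_of_le_of_ne hle (fun hEq => hne0 (by linarith))
        linarith
    · rw [if_neg haJ', sub_zero]
      have hclS : ClosedOn tl hd x xs (↑S) J := by
        intro f hf
        rw [Finset.mem_coe] at hf
        by_cases hfe : f = e
        · subst hfe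
          constructor
          · intro _ ht
            rcases hab with ⟨h1, _⟩ | ⟨_, h2⟩
            · exact absurd (h1 ▸ ht) haJ'
            · exact absurd (h2 ▸ ht) hbJ'
          · intro _ hh
            rcases hab with ⟨_, h2⟩ | ⟨h1, _⟩
            · exact absurd (h2 ▸ hh) hbJ'
            · exact absurd (h1 ▸ hh) haJ'
        · exact hclE f (mem_coe_erase hf hfe)
      exact hstabS J hJWsub hclS hJne' hJneW'
  · -- stability on W \ J₁
    intro J hJWd hJcl' hJne' hJneWd
    have haJ' : a ∉ J := fun h => (Finset.mem_sdiff.1 (hJWd h)).2 haJ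
    have hdisj : Disjoint J J₁ := by
      refine Finset.disjoint_left.2 fun v hv hv₁ => ?_
      exact (Finset.mem_sdiff.1 (hJWd hv)).2 hv₁
    have hUcl : ClosedOn tl hd x xs (↑(S.erase e)) (J ∪ J₁) :=
      closed_lift₂ hEnd hJcl hJWd hJcl'
    have hUsum : ∑ i ∈ J ∪ J₁, θ i = ∑ i ∈ J, θ i + β :=
      Finset.sum_union hdisj
    have hUW : J ∪ J₁ ⊆ W := Finset.union_subset (hJWd.trans (Finset.sdiff_subset)) hJW
    have hUne : (J ∪ J₁).Nonempty := hJne.mono Finset.subset_union_right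
    have hUneW : J ∪ J₁ ≠ W := by
      obtain ⟨w, hwWd, hwJ⟩ := Finset.exists_of_ssubset (hJWd.ssubset_of_ne hJneWd)
      intro hEq
      have hwU : w ∈ J ∪ J₁ := hEq ▸ (Finset.mem_sdiff.1 hwWd).1
      rcases Finset.mem_union.1 hwU with h | h
      · exact hwJ h
      · exact (Finset.mem_sdiff.1 hwWd).2 h
    rw [sum_theta' θ a b habne β J]
    simp only [if_neg haJ', sub_zero]
    by_cases hbJ' : b ∈ J
    · rw [if_pos hbJ']
      -- J ∪ J₁ is closed for all of S
      have hclS : ClosedOn tl hd x xs (↑S) (J ∪ J₁) := by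
        intro f hf
        rw [Finset.mem_coe] at hf
        by_cases hfe : f = e
        · subst hfe
          have haU : a ∈ J ∪ J₁ := Finset.mem_union.2 (Or.inr haJ)
          have hbU : b ∈ J ∪ J₁ := Finset.mem_union.2 (Or.inl hbJ')
          constructor
          · intro _ _
            rcases hab with ⟨_, h2⟩ | ⟨h1, _⟩
            · exact h2 ▸ hbU
            · exact h1 ▸ haU
          · intro _ _
            rcases hab with ⟨h1, _⟩ | ⟨_, h2⟩
            · exact h1 ▸ haU
            · exact h2 ▸ hbU
        · exact hUcl f (mem_coe_erase hf hfe)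
      have := hstabS (J ∪ J₁) hUW hclS hUne hUneW
      linarith
    · rw [if_neg hbJ', add_zero]
      have hJWsub : J ⊆ W := hJWd.trans (Finset.sdiff_subset)
      have hJneW' : J ≠ W := by
        intro hEq
        exact haJ' (hEq ▸ haW)
      by_cases hUpos : 0 < ∑ i ∈ J ∪ J₁, θ i
      · have : β ≤ 0 := hJsum
        linarith
      · have hdestab : DestabSub tl hd θ x xs W ↑(S.erase e) (J ∪ J₁) :=
          ⟨hUW, hUne, hUneW, hUcl, not_lt.1 hUpos⟩
        have hle : β ≤ ∑ i ∈ J ∪ J₁, θ i := hmin _ hdestab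
        have hge : 0 ≤ ∑ i ∈ J, θ i := by linarith
        exact lt_of_le_of_ne hge (Ne.symm (hgen J hJWsub hJne' hJneW'))

lemma sub_generic
    (hgen : GenericOn W θ) (hsum : ∑ i ∈ W, θ i = 0)
    (hJW : J₁ ⊆ W) (hJne : J₁.Nonempty) (hJneW : J₁ ≠ W)
    (haJ : a ∈ J₁) (hbJ : b ∉ J₁) (hbW : b ∈ W) (habne : a ≠ b) :
    GenericOn J₁ (fun i => if i = a then θ i - ∑ j ∈ J₁, θ j
        else if i = b then θ i + ∑ j ∈ J₁, θ j else θ i) ∧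
    GenericOn (W \ J₁) (fun i => if i = a then θ i - ∑ j ∈ J₁, θ j
        else if i = b then θ i + ∑ j ∈ J₁, θ j else θ i) ∧
    (∑ i ∈ J₁, (fun i => if i = a then θ i - ∑ j ∈ J₁, θ j
        else if i = b then θ i + ∑ j ∈ J₁, θ j else θ i) i = 0) ∧
    (∑ i ∈ W \ J₁, (fun i => if i = a then θ i - ∑ j ∈ J₁, θ j
        else if i = b then θ i + ∑ j ∈ J₁, θ j else θ i) i = 0) := by
  set β := ∑ j ∈ J₁, θ j with hβ
  have haW : a ∈ W := hJW haJ
  have hsd : ∑ i ∈ W \ J₁, θ i + ∑ i ∈ J₁, θ i = ∑ i ∈ W, θ i := Finset.sum_sdiff hJW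
  refine ⟨?_, ?_, ?_, ?_⟩
  · intro J hJJ₁ hJne' hJneJ₁
    have hbJ' : b ∉ J := fun h => hbJ (hJJ₁ h)
    have hJWsub : J ⊆ W := hJJ₁.trans hJW
    have hJneW' : J ≠ W := by
      intro hEq
      exact hJneW (le_antisymm hJW (hEq ▸ hJJ₁))
    rw [sum_theta' θ a b habne β J]
    simp only [if_neg hbJ', add_zero]
    by_cases haJ' : a ∈ J
    · rw [if_pos haJ']
      have hsd₁ : ∑ i ∈ J₁ \ J, θ i + ∑ i ∈ J, θ i = β := Finset.sum_sdiff hJJ₁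
      have hsdne : (J₁ \ J).Nonempty := by
        rw [Finset.sdiff_nonempty]
        intro hsub
        exact hJneJ₁ (le_antisymm hJJ₁ hsub)
      have hsdneW : J₁ \ J ≠ W := by
        intro hEq
        have : a ∈ J₁ \ J := hEq ▸ haW
        exact (Finset.mem_sdiff.1 this).2 haJ'
      have hne0 : ∑ i ∈ J₁ \ J, θ i ≠ 0 :=
        hgen _ ((Finset.sdiff_subset).trans hJW) hsdne hsdneW
      intro hEq
      exact hne0 (by linarith)
    · rw [if_neg haJ', sub_zero]
      exact hgen J hJWsub hJne' hJneW'
  · intro J hJWd hJne' hJneWd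
    have haJ' : a ∉ J := fun h => (Finset.mem_sdiff.1 (hJWd h)).2 haJ
    have hdisj : Disjoint J J₁ := by
      refine Finset.disjoint_left.2 fun v hv hv₁ => ?_
      exact (Finset.mem_sdiff.1 (hJWd hv)).2 hv₁
    rw [sum_theta' θ a b habne β J]
    simp only [if_neg haJ', sub_zero]
    by_cases hbJ' : b ∈ J
    · rw [if_pos hbJ']
      have hUsum : ∑ i ∈ J ∪ J₁, θ i = ∑ i ∈ J, θ i + β := Finset.sum_union hdisj
      have hUW : J ∪ J₁ ⊆ W := Finset.union_subset (hJWd.trans (Finset.sdiff_subset)) hJW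
      have hUne : (J ∪ J₁).Nonempty := hJne.mono Finset.subset_union_right
      have hUneW : J ∪ J₁ ≠ W := by
        obtain ⟨w, hwWd, hwJ⟩ := Finset.exists_of_ssubset (hJWd.ssubset_of_ne hJneWd)
        intro hEq
        have hwU : w ∈ J ∪ J₁ := hEq ▸ (Finset.mem_sdiff.1 hwWd).1
        rcases Finset.mem_union.1 hwU with h | h
        · exact hwJ h
        · exact (Finset.mem_sdiff.1 hwWd).2 h
      have := hgen _ hUW hUne hUneW
      intro hEq
      exact this (by linarith)
    · rw [if_neg hbJ', add_zero]
      have hJWsub : J ⊆ W := hJWd.trans (Finset.sdiff_subset)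
      have hJneW' : J ≠ W := by
        intro hEq
        exact haJ' (hEq ▸ haW)
      exact hgen J hJWsub hJne' hJneW'
  · rw [sum_theta' θ a b habne β J₁]
    simp only [if_pos haJ, if_neg hbJ, add_zero]
    ring
  · have haJ' : a ∉ W \ J₁ := fun h => (Finset.mem_sdiff.1 h).2 haJ
    have hbJ' : b ∈ W \ J₁ := Finset.mem_sdiff.2 ⟨hbW, hbJ⟩
    rw [sum_theta' θ a b habne β (W \ J₁)]
    simp only [if_neg haJ', if_pos hbJ', sub_zero]
    linarith

end Step2

end S14Aux


namespace S14Aux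

section Step3

variable {V E k : Type} [Fintype V] [LinearOrder E] [Zero k]
variable {tl hd : E → V} {x xs : E → k} {θ : V → ℝ} {W : Finset V} {S : Finset E} {e : E}

/-- the minimal destabilising subset is unique -/
lemma min_destab_unique
    (hgen : GenericOn W θ) {a b : V} (hbW : b ∈ W)
    {J₁ J₂ : Finset V}
    (hJ₁ : DestabSub tl hd θ x xs W ↑(S.erase e) J₁)
    (hJ₂ : DestabSub tl hd θ x xs W ↑(S.erase e) J₂)
    (haJ₁ : a ∈ J₁) (hbJ₁ : b ∉ J₁) (haJ₂ : a ∈ J₂) (hbJ₂ : b ∉ J₂)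
    (hmin₁ : ∀ J, DestabSub tl hd θ x xs W ↑(S.erase e) J → ∑ i ∈ J₁, θ i ≤ ∑ i ∈ J, θ i)
    (hmin₂ : ∀ J, DestabSub tl hd θ x xs W ↑(S.erase e) J → ∑ i ∈ J₂, θ i ≤ ∑ i ∈ J, θ i) :
    J₁ = J₂ := by
  obtain ⟨hJW₁, hJne₁, hJneW₁, hJcl₁, hJsum₁⟩ := hJ₁
  obtain ⟨hJW₂, hJne₂, hJneW₂, hJcl₂, hJsum₂⟩ := hJ₂
  have hββ : ∑ i ∈ J₁, θ i = ∑ i ∈ J₂, θ i :=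
    le_antisymm (hmin₁ J₂ ⟨hJW₂, hJne₂, hJneW₂, hJcl₂, hJsum₂⟩)
      (hmin₂ J₁ ⟨hJW₁, hJne₁, hJneW₁, hJcl₁, hJsum₁⟩)
  set β := ∑ i ∈ J₁, θ i with hβ
  have hsum_ui : ∑ i ∈ J₁ ∪ J₂, θ i + ∑ i ∈ J₁ ∩ J₂, θ i = β + β := by
    rw [Finset.sum_union_inter, ← hββ]
  have hIcl : ClosedOn tl hd x xs (↑(S.erase e)) (J₁ ∩ J₂) := closed_inter hJcl₁ hJcl₂
  have hUcl : ClosedOn tl hd x xs (↑(S.erase e)) (J₁ ∪ J₂) := closed_union hJcl₁ hJcl₂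
  have hIW : J₁ ∩ J₂ ⊆ W := Finset.inter_subset_left.trans hJW₁
  have hUW : J₁ ∪ J₂ ⊆ W := Finset.union_subset hJW₁ hJW₂
  have hIne : (J₁ ∩ J₂).Nonempty := ⟨a, Finset.mem_inter.2 ⟨haJ₁, haJ₂⟩⟩
  have hUne : (J₁ ∪ J₂).Nonempty := hJne₁.mono Finset.subset_union_left
  have hIneW : J₁ ∩ J₂ ≠ W := by
    intro hEq
    exact hbJ₁ (Finset.mem_inter.1 (hEq ▸ hbW : b ∈ J₁ ∩ J₂)).1
  have hUneW : J₁ ∪ J₂ ≠ W := by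
    intro hEq
    rcases Finset.mem_union.1 (hEq ▸ hbW : b ∈ J₁ ∪ J₂) with h | h
    · exact hbJ₁ h
    · exact hbJ₂ h
  have hβ0 : β ≤ 0 := hJsum₁
  have hIle : ∑ i ∈ J₁ ∩ J₂, θ i ≤ 0 := by
    by_contra hpos
    push_neg at hpos
    have hUle : ∑ i ∈ J₁ ∪ J₂, θ i < β := by linarith
    have hUdest : DestabSub tl hd θ x xs W ↑(S.erase e) (J₁ ∪ J₂) :=
      ⟨hUW, hUne, hUneW, hUcl, by linarith⟩
    have := hmin₁ _ hUdest
    linarith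
  have hIdest : DestabSub tl hd θ x xs W ↑(S.erase e) (J₁ ∩ J₂) :=
    ⟨hIW, hIne, hIneW, hIcl, hIle⟩
  have hIge : β ≤ ∑ i ∈ J₁ ∩ J₂, θ i := hmin₁ _ hIdest
  have hUle : ∑ i ∈ J₁ ∪ J₂, θ i ≤ β := by linarith
  have hUge : β ≤ ∑ i ∈ J₁ ∪ J₂, θ i := by
    refine hmin₁ _ ⟨hUW, hUne, hUneW, hUcl, by linarith⟩
  have hIeq : ∑ i ∈ J₁ ∩ J₂, θ i = β := by linarith
  -- J₁ \ (J₁ ∩ J₂) has zero sum hence is empty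
  have hsub : J₁ ∩ J₂ ⊆ J₁ := Finset.inter_subset_left
  have hsd : ∑ i ∈ J₁ \ (J₁ ∩ J₂), θ i + ∑ i ∈ J₁ ∩ J₂, θ i = β := Finset.sum_sdiff hsub
  have hsd0 : ∑ i ∈ J₁ \ (J₁ ∩ J₂), θ i = 0 := by linarith
  have hsdneW : J₁ \ (J₁ ∩ J₂) ≠ W := by
    intro hEq
    have : b ∈ J₁ \ (J₁ ∩ J₂) := hEq ▸ hbW
    exact hbJ₁ (Finset.mem_sdiff.1 this).1
  have hEmpty : J₁ \ (J₁ ∩ J₂) = ∅ :=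
    GenericOn.eq_empty hgen ((Finset.sdiff_subset).trans hJW₁) hsdneW hsd0
  have h12 : J₁ ⊆ J₂ := by
    intro v hv
    by_contra hvJ₂
    have : v ∈ J₁ \ (J₁ ∩ J₂) :=
      Finset.mem_sdiff.2 ⟨hv, fun h => hvJ₂ (Finset.mem_inter.1 h).2⟩
    rw [hEmpty] at this
    exact absurd this (Finset.notMem_empty v)
  -- symmetric direction
  have hsub' : J₁ ∩ J₂ ⊆ J₂ := Finset.inter_subset_right
  have hsd' : ∑ i ∈ J₂ \ (J₁ ∩ J₂), θ i + ∑ i ∈ J₁ ∩ J₂, θ i = β := by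
    rw [Finset.sum_sdiff hsub', ← hββ]
  have hsd0' : ∑ i ∈ J₂ \ (J₁ ∩ J₂), θ i = 0 := by linarith
  have hsdneW' : J₂ \ (J₁ ∩ J₂) ≠ W := by
    intro hEq
    have : b ∈ J₂ \ (J₁ ∩ J₂) := hEq ▸ hbW
    exact hbJ₂ (Finset.mem_sdiff.1 this).1
  have hEmpty' : J₂ \ (J₁ ∩ J₂) = ∅ :=
    GenericOn.eq_empty hgen ((Finset.sdiff_subset).trans hJW₂) hsdneW' hsd0'
  have h21 : J₂ ⊆ J₁ := by
    intro v hv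
    by_contra hvJ₁
    have : v ∈ J₂ \ (J₁ ∩ J₂) :=
      Finset.mem_sdiff.2 ⟨hv, fun h => hvJ₁ (Finset.mem_inter.1 h).1⟩
    rw [hEmpty'] at this
    exact absurd this (Finset.notMem_empty v)
  exact le_antisymm h12 h21

/-- the contracted edge carries a nonzero coordinate in the correct direction -/
lemma e_nonzero (hstabS : StableSub tl hd θ x xs W ↑S) (he : e ∈ S)
    {J₁ : Finset V} (hJ₁ : DestabSub tl hd θ x xs W ↑(S.erase e) J₁) :
    (tl e ∈ J₁ → hd e ∉ J₁ → x e ≠ 0) ∧ (hd e ∈ J₁ → tl e ∉ J₁ → xs e ≠ 0) := by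
  obtain ⟨hJW, hJne, hJneW, hJcl, hJsum⟩ := hJ₁
  constructor
  · intro ht hh hx0
    have hcl : ClosedOn tl hd x xs (↑S) J₁ := by
      intro f hf
      rw [Finset.mem_coe] at hf
      by_cases hfe : f = e
      · subst hfe
        exact ⟨fun hx _ => absurd hx0 hx, fun _ hhd => absurd hhd hh⟩
      · exact hJcl f (mem_coe_erase hf hfe)
    have := hstabS J₁ hJW hcl hJne hJneW
    linarith
  · intro hh ht hx0
    have hcl : ClosedOn tl hd x xs (↑S) J₁ := by
      intro f hf
      rw [Finset.mem_coe] at hf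
      by_cases hfe : f = e
      · subst hfe
        exact ⟨fun _ htl => absurd htl ht, fun hx _ => absurd hx0 hx⟩
      · exact hJcl f (mem_coe_erase hf hfe)
    have := hstabS J₁ hJW hcl hJne hJneW
    linarith

/-- if `W` has at least two vertices, a stable pair forces a non-loop edge -/
lemma nonloop_exists (hstabS : StableSub tl hd θ x xs W ↑S)
    (hsum : ∑ i ∈ W, θ i = 0) (hWne : W.Nonempty) (hW2 : 1 < W.card) :
    ∃ f ∈ S, tl f ≠ hd f := by
  by_contra h
  push_neg at h
  have hpos : ∀ v ∈ W, 0 < θ v := by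
    intro v hv
    have hcl : ClosedOn tl hd x xs (↑S) {v} := by
      intro f hf
      rw [Finset.mem_coe] at hf
      have hloop := h f hf
      constructor
      · intro _ ht
        rw [← hloop]
        exact ht
      · intro _ hh
        rw [hloop]
        exact hh
    have hneW : ({v} : Finset V) ≠ W := by
      intro hEq
      rw [← hEq] at hW2
      simp at hW2
    have := hstabS {v} (Finset.singleton_subset_iff.2 hv) hcl ⟨v, Finset.mem_singleton_self v⟩ hneW
    simpa using this
  have := Finset.sum_pos hpos hWne
  linarith

end Step3

section Glue

variable {V E : Type} [Fintype V] [LinearOrder E] {tl hd : E → V}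

/-- component of a vertex of `A` in a disjoint union of edge-sets supported on `A` and `B` -/
lemma component_union_eq {A B : Finset V} {D₁ D₂ : Finset E}
    (hAB : ∀ v ∈ A, v ∉ B)
    (hD₁ : ∀ f ∈ D₁, tl f ∈ A ∧ hd f ∈ A) (hD₂ : ∀ f ∈ D₂, tl f ∈ B ∧ hd f ∈ B)
    (hspan₁ : ∀ u ∈ A, ∀ w ∈ A, joinedRel tl hd (↑D₁) u w)
    {v : V} (hv : v ∈ A) :
    component tl hd (D₁ ∪ D₂) v = A := by
  refine component_eq A hv ?_ ?_
  · intro f hf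
    rcases Finset.mem_union.1 hf with h | h
    · simp [(hD₁ f h).1, (hD₁ f h).2]
    · have h1 := (hD₂ f h).1
      have h2 := (hD₂ f h).2
      constructor
      · intro ht; exact absurd h1 (by intro _; exact hAB _ ht h1)
      · intro hh; exact absurd h2 (by intro _; exact hAB _ hh h2)
  · intro w hw
    exact joined_mono (fun g hg => Finset.mem_coe.2
      (Finset.mem_union.2 (Or.inl (Finset.mem_coe.1 hg)))) (hspan₁ v hv w hw)

/-- component computation after putting back the connecting edge `e`:
case where the `D₁`-component of `v` does not contain the attaching vertex `a`. -/
lemma component_glue_out {A B : Finset V} {D₁ D₂ : Finset E} {e : E} {a b : V}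
    (hAB : ∀ v ∈ A, v ∉ B)
    (hD₁ : ∀ f ∈ D₁, tl f ∈ A ∧ hd f ∈ A) (hD₂ : ∀ f ∈ D₂, tl f ∈ B ∧ hd f ∈ B)
    (haA : a ∈ A) (hbB : b ∈ B)
    (hte : (tl e = a ∧ hd e = b) ∨ (tl e = b ∧ hd e = a))
    {v : V} (hv : v ∈ A)
    (hKa : a ∉ component tl hd D₁ v) :
    component tl hd (insert e (D₁ ∪ D₂)) v = component tl hd D₁ v := by
  set K := component tl hd D₁ v with hK
  have hKA : ∀ w ∈ K, w ∈ A := by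
    intro w hw
    have := joined_sat (A := A) (fun f hf => by
      have := hD₁ f (Finset.mem_coe.1 hf)
      simp [this.1, this.2]) (mem_component.1 hw)
    exact this.1 hv
  refine component_eq K self_mem_component ?_ ?_
  · intro f hf
    rcases Finset.mem_insert.1 hf with h | h
    · subst h
      have htK : tl f ∉ K := by
        rcases hte with ⟨h1, _⟩ | ⟨h1, _⟩
        · rw [h1]; exact hKa
        · rw [h1]; intro hc; exact hAB _ (hKA _ hc) hbB
      have hhK : hd f ∉ K := by
        rcases hte with ⟨_, h2⟩ | ⟨_, h2⟩
        · rw [h2]; intro hc; exact hAB _ (hKA _ hc) hbB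
        · rw [h2]; exact hKa
      simp [htK, hhK]
    · rcases Finset.mem_union.1 h with h | h
      · exact component_sat v f h
      · have h1 := (hD₂ f h).1
        have h2 := (hD₂ f h).2
        constructor
        · intro ht; exact absurd h1 (fun _ => hAB _ (hKA _ ht) h1)
        · intro hh; exact absurd h2 (fun _ => hAB _ (hKA _ hh) h2)
  · intro w hw
    exact joined_mono (fun g hg => Finset.mem_coe.2
      (Finset.mem_insert.2 (Or.inr (Finset.mem_union.2 (Or.inl (Finset.mem_coe.1 hg))))))
      (mem_component.1 hw)

/-- case where the `D₁`-component of `v` contains the attaching vertex `a`. -/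
lemma component_glue_in {A B : Finset V} {D₁ D₂ : Finset E} {e : E} {a b : V}
    (hAB : ∀ v ∈ A, v ∉ B)
    (hD₁ : ∀ f ∈ D₁, tl f ∈ A ∧ hd f ∈ A) (hD₂ : ∀ f ∈ D₂, tl f ∈ B ∧ hd f ∈ B)
    (hspan₂ : ∀ u ∈ B, ∀ w ∈ B, joinedRel tl hd (↑D₂) u w)
    (haA : a ∈ A) (hbB : b ∈ B)
    (hte : (tl e = a ∧ hd e = b) ∨ (tl e = b ∧ hd e = a))
    {v : V} (hv : v ∈ A)
    (hKa : a ∈ component tl hd D₁ v) :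
    component tl hd (insert e (D₁ ∪ D₂)) v = component tl hd D₁ v ∪ B := by
  set K := component tl hd D₁ v with hK
  have hKA : ∀ w ∈ K, w ∈ A := by
    intro w hw
    have := joined_sat (A := A) (fun f hf => by
      have := hD₁ f (Finset.mem_coe.1 hf)
      simp [this.1, this.2]) (mem_component.1 hw)
    exact this.1 hv
  have hmsub : (↑D₁ : Set E) ⊆ ↑(insert e (D₁ ∪ D₂)) := by
    intro g hg
    exact Finset.mem_coe.2 (Finset.mem_insert.2 (Or.inr (Finset.mem_union.2
      (Or.inl (Finset.mem_coe.1 hg)))))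
  have hmsub₂ : (↑D₂ : Set E) ⊆ ↑(insert e (D₁ ∪ D₂)) := by
    intro g hg
    exact Finset.mem_coe.2 (Finset.mem_insert.2 (Or.inr (Finset.mem_union.2
      (Or.inr (Finset.mem_coe.1 hg)))))
  refine component_eq (K ∪ B) (Finset.mem_union.2 (Or.inl self_mem_component)) ?_ ?_
  · intro f hf
    rcases Finset.mem_insert.1 hf with h | h
    · subst h
      have htK : tl f ∈ K ∪ B := by
        rcases hte with ⟨h1, _⟩ | ⟨h1, _⟩
        · rw [h1]; exact Finset.mem_union.2 (Or.inl hKa)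
        · rw [h1]; exact Finset.mem_union.2 (Or.inr hbB)
      have hhK : hd f ∈ K ∪ B := by
        rcases hte with ⟨_, h2⟩ | ⟨_, h2⟩
        · rw [h2]; exact Finset.mem_union.2 (Or.inr hbB)
        · rw [h2]; exact Finset.mem_union.2 (Or.inl hKa)
      simp [htK, hhK]
    · rcases Finset.mem_union.1 h with h | h
      · have h1 := (hD₁ f h).1
        have h2 := (hD₁ f h).2
        have hiff := component_sat (tl := tl) (hd := hd) v f h
        constructor
        · intro ht
          rcases Finset.mem_union.1 ht with ht | ht
          · exact Finset.mem_union.2 (Or.inl (hiff.1 ht))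
          · exact absurd ht (hAB _ h1)
        · intro hh
          rcases Finset.mem_union.1 hh with hh | hh
          · exact Finset.mem_union.2 (Or.inl (hiff.2 hh))
          · exact absurd hh (hAB _ h2)
      · exact ⟨fun _ => Finset.mem_union.2 (Or.inr (hD₂ f h).2),
          fun _ => Finset.mem_union.2 (Or.inr (hD₂ f h).1)⟩
  · intro w hw
    have hva : joinedRel tl hd (↑(insert e (D₁ ∪ D₂))) v a :=
      joined_mono hmsub (mem_component.1 hKa)
    have hab' : joinedRel tl hd (↑(insert e (D₁ ∪ D₂))) a b := by
      refine Relation.EqvGen.rel _ _ ⟨e, ?_, ?_⟩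
      · exact Finset.mem_coe.2 (Finset.mem_insert_self e _)
      · rcases hte with ⟨h1, h2⟩ | ⟨h1, h2⟩
        · exact Or.inl ⟨h1, h2⟩
        · exact Or.inr ⟨h1, h2⟩
    rcases Finset.mem_union.1 hw with hwK | hwB
    · exact joined_mono hmsub (mem_component.1 hwK)
    · exact Relation.EqvGen.trans _ _ _ (Relation.EqvGen.trans _ _ _ hva hab')
        (joined_mono hmsub₂ (hspan₂ b hbB w hwB))

end Glue

end S14Aux


namespace S14Aux

lemma component_subset {V E : Type} [Fintype V] {tl hd : E → V} {A : Finset V} {D : Finset E}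
    (hD : ∀ f ∈ D, tl f ∈ A ∧ hd f ∈ A) {v : V} (hv : v ∈ A) :
    component tl hd D v ⊆ A := by
  intro w hw
  have := joined_sat (A := A) (fun f hf => by
    have := hD f (Finset.mem_coe.1 hf)
    simp [this.1, this.2]) (mem_component.1 hw)
  exact this.1 hv

lemma tree_props {V E k : Type} [Fintype V] [LinearOrder E] [Zero k]
    {tl hd : E → V} {x xs : E → k} {W : Finset V} {S : Finset E} {θ : V → ℝ} {T : Finset E}
    (hT : TreeAssign tl hd x xs W S θ T) :
    ∀ (_ : ∀ f ∈ S, tl f ∈ W ∧ hd f ∈ W) (_ : GenericOn W θ)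
      (_ : ∑ i ∈ W, θ i = 0) (_ : StableSub tl hd θ x xs W ↑S),
    (T ⊆ S) ∧ (T.card + 1 = W.card) ∧
    (∀ u ∈ W, ∀ v ∈ W, joinedRel tl hd (↑T) u v) ∧
    (∀ f ∈ T, ((0 < ∑ j ∈ component tl hd (T.erase f) (hd f), θ j) → x f ≠ 0) ∧
      (¬(0 < ∑ j ∈ component tl hd (T.erase f) (hd f), θ j) → xs f ≠ 0)) := by
  induction hT with
  | base W S θ hW =>
      intro hEnd hgen hsum hstabS
      obtain ⟨w, hWeq⟩ := Finset.card_eq_one.1 hW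
      refine ⟨Finset.empty_subset S, by simp [hW], ?_, ?_⟩
      · intro u hu v hv
        rw [hWeq, Finset.mem_singleton] at hu hv
        rw [hu, hv]
        exact Relation.EqvGen.refl w
      · intro f hf
        exact absurd hf (Finset.notMem_empty f)
  | delete W S θ e he hloop hsmall hstab T ih IH =>
      intro hEnd hgen hsum hstabS
      obtain ⟨h1, h2, h3, h4⟩ := IH (fun f hf => hEnd f (Finset.mem_of_mem_erase hf))
        hgen hsum hstab
      exact ⟨h1.trans (Finset.erase_subset e S), h2, h3, h4⟩
  | contract W S θ e a b he hloop hsmall hab J₁ hJ₁ hall hmin T₁ T₂ ih₁ ih₂ IH₁ IH₂ =>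
      intro hEnd hgen hsum hstabS
      obtain ⟨haJ, hbJ⟩ := hall J₁ hJ₁
      have hJ₁' := hJ₁
      obtain ⟨hJW, hJne, hJneW, hJcl, hJsum⟩ := hJ₁'
      have habne : a ≠ b := fun hEq => hbJ (hEq ▸ haJ)
      have haW : a ∈ W := hJW haJ
      have hte : (tl e = a ∧ hd e = b) ∨ (tl e = b ∧ hd e = a) := destab_endpoints he hab
      have hbW : b ∈ W := by
        rcases hab with ⟨_, h2⟩ | ⟨_, h2⟩
        · rw [h2]; exact (hEnd e he).2
        · rw [h2]; exact (hEnd e he).1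
      have hbWd : b ∈ W \ J₁ := Finset.mem_sdiff.2 ⟨hbW, hbJ⟩
      have hEnd₁ : ∀ f ∈ S.filter (fun f => tl f ∈ J₁ ∧ hd f ∈ J₁),
          tl f ∈ J₁ ∧ hd f ∈ J₁ := fun f hf => (Finset.mem_filter.1 hf).2
      have hEnd₂ : ∀ f ∈ S.filter (fun f => tl f ∈ W \ J₁ ∧ hd f ∈ W \ J₁),
          tl f ∈ W \ J₁ ∧ hd f ∈ W \ J₁ := fun f hf => (Finset.mem_filter.1 hf).2
      have hstab' := sub_stable hEnd hgen hsum hstabS he hab hJ₁ haJ hbJ hmin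
      have hgen' := sub_generic hgen hsum hJW hJne hJneW haJ hbJ hbW habne
      obtain ⟨hT₁S, hcard₁, hspan₁, hsign₁⟩ := IH₁ hEnd₁ hgen'.1 hgen'.2.2.1 hstab'.1
      obtain ⟨hT₂S, hcard₂, hspan₂, hsign₂⟩ := IH₂ hEnd₂ hgen'.2.1 hgen'.2.2.2 hstab'.2
      set β := ∑ j ∈ J₁, θ j with hβdef
      have hβneg : β < 0 := lt_of_le_of_ne hJsum (hgen J₁ hJW hJne hJneW)
      have hsumWd : ∑ i ∈ W \ J₁, θ i = -β := by
        have := Finset.sum_sdiff (f := θ) hJW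
        linarith
      have hT₁E : ∀ f ∈ T₁, tl f ∈ J₁ ∧ hd f ∈ J₁ := fun f hf => hEnd₁ f (hT₁S hf)
      have hT₂E : ∀ f ∈ T₂, tl f ∈ W \ J₁ ∧ hd f ∈ W \ J₁ := fun f hf => hEnd₂ f (hT₂S hf)
      have hAB : ∀ v ∈ J₁, v ∉ W \ J₁ := fun v hv h => (Finset.mem_sdiff.1 h).2 hv
      have hBA : ∀ v ∈ W \ J₁, v ∉ J₁ := fun v hv h => (Finset.mem_sdiff.1 hv).2 h
      have heT₁ : e ∉ T₁ := by
        intro h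
        rcases hte with ⟨_, h2⟩ | ⟨h1, _⟩
        · exact hbJ (h2 ▸ (hT₁E e h).2)
        · exact hbJ (h1 ▸ (hT₁E e h).1)
      have heT₂ : e ∉ T₂ := by
        intro h
        rcases hte with ⟨h1, _⟩ | ⟨_, h2⟩
        · exact (Finset.mem_sdiff.1 (h1 ▸ (hT₂E e h).1)).2 haJ
        · exact (Finset.mem_sdiff.1 (h2 ▸ (hT₂E e h).2)).2 haJ
      have hdisjT : Disjoint T₁ T₂ := by
        refine Finset.disjoint_left.2 fun f hf₁ hf₂ => ?_
        exact (Finset.mem_sdiff.1 (hT₂E f hf₂).1).2 (hT₁E f hf₁).1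
      have heU : e ∉ T₁ ∪ T₂ := by
        rw [Finset.mem_union]
        rintro (h | h)
        · exact heT₁ h
        · exact heT₂ h
      have hTsubS : insert e (T₁ ∪ T₂) ⊆ S := by
        rw [Finset.insert_subset_iff]
        exact ⟨he, Finset.union_subset (hT₁S.trans (Finset.filter_subset _ S))
          (hT₂S.trans (Finset.filter_subset _ S))⟩
      have hsubT₁ : (↑T₁ : Set E) ⊆ ↑(insert e (T₁ ∪ T₂)) := fun g hg =>
        Finset.mem_coe.2 (Finset.mem_insert.2 (Or.inr (Finset.mem_union.2
          (Or.inl (Finset.mem_coe.1 hg)))))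
      have hsubT₂ : (↑T₂ : Set E) ⊆ ↑(insert e (T₁ ∪ T₂)) := fun g hg =>
        Finset.mem_coe.2 (Finset.mem_insert.2 (Or.inr (Finset.mem_union.2
          (Or.inr (Finset.mem_coe.1 hg)))))
      have hjab : joinedRel tl hd (↑(insert e (T₁ ∪ T₂))) a b := by
        refine Relation.EqvGen.rel _ _ ⟨e, Finset.mem_coe.2 (Finset.mem_insert_self e _), ?_⟩
        rcases hte with ⟨h1, h2⟩ | ⟨h1, h2⟩
        · exact Or.inl ⟨h1, h2⟩
        · exact Or.inr ⟨h1, h2⟩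
      have hjoina : ∀ u ∈ W, joinedRel tl hd (↑(insert e (T₁ ∪ T₂))) a u := by
        intro u hu
        by_cases hu₁ : u ∈ J₁
        · exact joined_mono hsubT₁ (hspan₁ a haJ u hu₁)
        · have hu₂ : u ∈ W \ J₁ := Finset.mem_sdiff.2 ⟨hu, hu₁⟩
          exact Relation.EqvGen.trans _ _ _ hjab
            (joined_mono hsubT₂ (hspan₂ b hbWd u hu₂))
      refine ⟨hTsubS, ?_, ?_, ?_⟩
      · rw [Finset.card_insert_of_notMem heU, Finset.card_union_of_disjoint hdisjT]
        have := Finset.card_sdiff_add_card_eq_card hJW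
        omega
      · intro u hu v hv
        exact Relation.EqvGen.trans _ _ _
          (Relation.EqvGen.symm _ _ (hjoina u hu)) (hjoina v hv)
      · intro f hf
        rcases Finset.mem_insert.1 hf with hfe | hfU
        · -- the contracted edge e itself
          subst hfe
          have hErase : (insert f (T₁ ∪ T₂)).erase f = T₁ ∪ T₂ := Finset.erase_insert heU
          rw [hErase]
          have henz := e_nonzero hstabS he hJ₁
          rcases hte with ⟨h1, h2⟩ | ⟨h1, h2⟩
          · -- hd f = b : positive side
            have hcomp : component tl hd (T₁ ∪ T₂) (hd f) = W \ J₁ := by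
              rw [Finset.union_comm]
              exact component_union_eq hBA hT₂E hT₁E hspan₂ (h2 ▸ hbWd)
            rw [hcomp, hsumWd]
            constructor
            · intro _
              exact henz.1 (h1 ▸ haJ) (h2 ▸ hbJ)
            · intro hcon
              exact absurd (by linarith : (0:ℝ) < -β) hcon
          · -- hd f = a : non-positive side
            have hcomp : component tl hd (T₁ ∪ T₂) (hd f) = J₁ :=
              component_union_eq hAB hT₁E hT₂E hspan₁ (h2 ▸ haJ)
            rw [hcomp, ← hβdef]
            constructor
            · intro hcon
              exact absurd hcon (by linarith)
            · intro _
              exact henz.2 (h2 ▸ haJ) (h1 ▸ hbJ)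
        · rcases Finset.mem_union.1 hfU with hfT₁ | hfT₂
          · -- f ∈ T₁
            have hfe : f ≠ e := fun h => heT₁ (h ▸ hfT₁)
            have hfT₂' : f ∉ T₂ := Finset.disjoint_left.1 hdisjT hfT₁
            have hErase : (insert e (T₁ ∪ T₂)).erase f = insert e (T₁.erase f ∪ T₂) := by
              rw [Finset.erase_insert_of_ne (Ne.symm hfe), Finset.erase_union_distrib,
                Finset.erase_eq_of_notMem hfT₂']
            rw [hErase]
            have hD₁' : ∀ g ∈ T₁.erase f, tl g ∈ J₁ ∧ hd g ∈ J₁ :=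
              fun g hg => hT₁E g (Finset.mem_of_mem_erase hg)
            have hhf : hd f ∈ J₁ := (hT₁E f hfT₁).2
            set K := component tl hd (T₁.erase f) (hd f) with hKdef
            have hKsub : K ⊆ J₁ := component_subset hD₁' hhf
            have hsig := hsign₁ f hfT₁
            rw [← hKdef] at hsig
            have hbK : b ∉ K := fun h => hbJ (hKsub h)
            have hsumK := sum_theta' θ a b habne β K
            by_cases haK : a ∈ K
            · have hcomp : component tl hd (insert e (T₁.erase f ∪ T₂)) (hd f)
                  = K ∪ (W \ J₁) :=
                component_glue_in hAB hD₁' hT₂E hspan₂ haJ hbWd hte hhf haK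
              rw [hcomp]
              have hdisjK : Disjoint K (W \ J₁) :=
                Finset.disjoint_left.2 fun v hv h => (Finset.mem_sdiff.1 h).2 (hKsub hv)
              have hsumU : ∑ j ∈ K ∪ (W \ J₁), θ j = ∑ j ∈ K, θ j + -β := by
                rw [Finset.sum_union hdisjK, hsumWd]
              rw [hsumU]
              have hEq : ∑ j ∈ K, θ j + -β
                  = ∑ j ∈ K, (if j = a then θ j - β else if j = b then θ j + β else θ j) := by
                rw [hsumK, if_pos haK, if_neg hbK]
                ring
              rw [hEq]
              exact hsig
            · have hcomp : component tl hd (insert e (T₁.erase f ∪ T₂)) (hd f) = K :=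
                component_glue_out hAB hD₁' hT₂E haJ hbWd hte hhf haK
              rw [hcomp]
              have hEq : ∑ j ∈ K, θ j
                  = ∑ j ∈ K, (if j = a then θ j - β else if j = b then θ j + β else θ j) := by
                rw [hsumK, if_neg haK, if_neg hbK]
                ring
              rw [hEq]
              exact hsig
          · -- f ∈ T₂
            have hfe : f ≠ e := fun h => heT₂ (h ▸ hfT₂)
            have hfT₁' : f ∉ T₁ := Finset.disjoint_right.1 hdisjT hfT₂
            have hErase : (insert e (T₁ ∪ T₂)).erase f = insert e (T₂.erase f ∪ T₁) := by
              rw [Finset.erase_insert_of_ne (Ne.symm hfe), Finset.erase_union_distrib,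
                Finset.erase_eq_of_notMem hfT₁', Finset.union_comm]
            rw [hErase]
            have hD₂' : ∀ g ∈ T₂.erase f, tl g ∈ W \ J₁ ∧ hd g ∈ W \ J₁ :=
              fun g hg => hT₂E g (Finset.mem_of_mem_erase hg)
            have hhf : hd f ∈ W \ J₁ := (hT₂E f hfT₂).2
            set K := component tl hd (T₂.erase f) (hd f) with hKdef
            have hKsub : K ⊆ W \ J₁ := component_subset hD₂' hhf
            have hsig := hsign₂ f hfT₂
            rw [← hKdef] at hsig
            have haK : a ∉ K := fun h => (Finset.mem_sdiff.1 (hKsub h)).2 haJ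
            have hsumK := sum_theta' θ a b habne β K
            have hte' : (tl e = b ∧ hd e = a) ∨ (tl e = a ∧ hd e = b) := by
              rcases hte with h | h
              · exact Or.inr h
              · exact Or.inl h
            by_cases hbK : b ∈ K
            · have hcomp : component tl hd (insert e (T₂.erase f ∪ T₁)) (hd f)
                  = K ∪ J₁ :=
                component_glue_in hBA hD₂' hT₁E hspan₁ hbWd haJ hte' hhf hbK
              rw [hcomp]
              have hdisjK : Disjoint K J₁ :=
                Finset.disjoint_left.2 fun v hv h => (Finset.mem_sdiff.1 (hKsub hv)).2 h
              have hsumU : ∑ j ∈ K ∪ J₁, θ j = ∑ j ∈ K, θ j + β := by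
                rw [Finset.sum_union hdisjK]
              rw [hsumU]
              have hEq : ∑ j ∈ K, θ j + β
                  = ∑ j ∈ K, (if j = a then θ j - β else if j = b then θ j + β else θ j) := by
                rw [hsumK, if_neg haK, if_pos hbK]
                ring
              rw [hEq]
              exact hsig
            · have hcomp : component tl hd (insert e (T₂.erase f ∪ T₁)) (hd f) = K :=
                component_glue_out hBA hD₂' hT₁E hbWd haJ hte' hhf hbK
              rw [hcomp]
              have hEq : ∑ j ∈ K, θ j
                  = ∑ j ∈ K, (if j = a then θ j - β else if j = b then θ j + β else θ j) := by
                rw [hsumK, if_neg haK, if_neg hbK]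
                ring
              rw [hEq]
              exact hsig

end S14Aux


namespace S14Aux

lemma card_one_loop {V E : Type} {tl hd : E → V} {W : Finset V} {e : E}
    (hW : W.card = 1) (htl : tl e ∈ W) (hhd : hd e ∈ W) : tl e = hd e := by
  obtain ⟨w, hWeq⟩ := Finset.card_eq_one.1 hW
  rw [hWeq, Finset.mem_singleton] at htl hhd
  rw [htl, hhd]

lemma exists_tree {V E k : Type} [Fintype V] [LinearOrder E] [Zero k]
    (tl hd : E → V) (x xs : E → k) :
    ∀ (n : ℕ) (S : Finset E), S.card ≤ n → ∀ (W : Finset V) (θ : V → ℝ),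
      W.Nonempty → (∀ f ∈ S, tl f ∈ W ∧ hd f ∈ W) → GenericOn W θ →
      (∑ i ∈ W, θ i = 0) → StableSub tl hd θ x xs W ↑S →
      ∃ T, TreeAssign tl hd x xs W S θ T := by
  intro n
  induction n with
  | zero =>
      intro S hcard W θ hWne hEnd hgen hsum hstab
      have hS : S = ∅ := Finset.card_eq_zero.1 (Nat.le_antisymm hcard (Nat.zero_le _))
      by_cases hW1 : W.card = 1
      · exact ⟨∅, TreeAssign.base W S θ hW1⟩
      · have hW2 : 1 < W.card := by
          have := Finset.Nonempty.card_pos hWne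
          omega
        obtain ⟨f, hfS, _⟩ := nonloop_exists hstab hsum hWne hW2
        rw [hS] at hfS
        exact absurd hfS (Finset.notMem_empty f)
  | succ n IH =>
      intro S hcard W θ hWne hEnd hgen hsum hstab
      by_cases hW1 : W.card = 1
      · exact ⟨∅, TreeAssign.base W S θ hW1⟩
      have hW2 : 1 < W.card := by
        have := Finset.Nonempty.card_pos hWne
        omega
      have hNne : (S.filter fun f => tl f ≠ hd f).Nonempty := by
        obtain ⟨f, hfS, hfl⟩ := nonloop_exists hstab hsum hWne hW2
        exact ⟨f, Finset.mem_filter.2 ⟨hfS, hfl⟩⟩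
      set e := (S.filter fun f => tl f ≠ hd f).min' hNne with hedef
      have heN : e ∈ S.filter fun f => tl f ≠ hd f := Finset.min'_mem _ hNne
      have he : e ∈ S := (Finset.mem_filter.1 heN).1
      have hloop : tl e ≠ hd e := (Finset.mem_filter.1 heN).2
      have hsmall : ∀ f ∈ S, tl f ≠ hd f → e ≤ f := fun f hf hl =>
        Finset.min'_le _ f (Finset.mem_filter.2 ⟨hf, hl⟩)
      have hScard : 1 ≤ S.card := Finset.card_pos.2 ⟨e, he⟩
      have hcardE : (S.erase e).card ≤ n := by
        rw [Finset.card_erase_of_mem he]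
        omega
      by_cases hst : StableSub tl hd θ x xs W ↑(S.erase e)
      · obtain ⟨T, hTT⟩ := IH (S.erase e) hcardE W θ hWne
          (fun f hf => hEnd f (Finset.mem_of_mem_erase hf)) hgen hsum hst
        exact ⟨T, TreeAssign.delete W S θ e he hloop hsmall hst T hTT⟩
      · -- find a destabilising subset
        have hDex : ∃ J, DestabSub tl hd θ x xs W ↑(S.erase e) J := by
          unfold StableSub at hst
          push_neg at hst
          obtain ⟨J, h1, h2, h3, h4, h5⟩ := hst
          exact ⟨J, h1, h3, h4, h2, h5⟩
        have hDne : (Finset.univ.filter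
            (fun J => DestabSub tl hd θ x xs W ↑(S.erase e) J)).Nonempty := by
          obtain ⟨J, hJ⟩ := hDex
          exact ⟨J, Finset.mem_filter.2 ⟨Finset.mem_univ J, hJ⟩⟩
        obtain ⟨J₁, hJ₁mem, hJ₁min⟩ :=
          Finset.exists_min_image _ (fun J => ∑ i ∈ J, θ i) hDne
        have hJ₁ : DestabSub tl hd θ x xs W ↑(S.erase e) J₁ :=
          (Finset.mem_filter.1 hJ₁mem).2
        have hmin : ∀ J, DestabSub tl hd θ x xs W ↑(S.erase e) J →
            ∑ i ∈ J₁, θ i ≤ ∑ i ∈ J, θ i := fun J hJ =>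
          hJ₁min J (Finset.mem_filter.2 ⟨Finset.mem_univ J, hJ⟩)
        have hJ₁' := hJ₁
        obtain ⟨hJW, hJne, hJneW, hJcl, hJsum⟩ := hJ₁'
        obtain ⟨w, hwW, hwJ⟩ := Finset.exists_of_ssubset (hJW.ssubset_of_ne hJneW)
        have hWdne : (W \ J₁).Nonempty := ⟨w, Finset.mem_sdiff.2 ⟨hwW, hwJ⟩⟩
        -- choose the common endpoint
        have hone := one_endpoint hstab he hJ₁
        have key : ∀ (a b : V), ((a = tl e ∧ b = hd e) ∨ (a = hd e ∧ b = tl e)) →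
            a ∈ J₁ → b ∉ J₁ →
            (∀ J, DestabSub tl hd θ x xs W ↑(S.erase e) J → a ∈ J ∧ b ∉ J) →
            ∃ T, TreeAssign tl hd x xs W S θ T := by
          intro a b hab haJ hbJ hall
          have habne : a ≠ b := fun hEq => hbJ (hEq ▸ haJ)
          have hbW : b ∈ W := by
            rcases hab with ⟨_, h2⟩ | ⟨_, h2⟩
            · rw [h2]; exact (hEnd e he).2
            · rw [h2]; exact (hEnd e he).1
          have hstab' := sub_stable hEnd hgen hsum hstab he hab hJ₁ haJ hbJ hmin
          have hgen' := sub_generic hgen hsum hJW hJne hJneW haJ hbJ hbW habne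
          have hbend : tl e = b ∨ hd e = b := by
            rcases hab with ⟨_, h2⟩ | ⟨_, h2⟩
            · exact Or.inr h2.symm
            · exact Or.inl h2.symm
          have haend : tl e = a ∨ hd e = a := by
            rcases hab with ⟨h1, _⟩ | ⟨h1, _⟩
            · exact Or.inl h1.symm
            · exact Or.inr h1.symm
          have hS₁sub : (S.filter fun f => tl f ∈ J₁ ∧ hd f ∈ J₁) ⊆ S.erase e := by
            intro f hf
            obtain ⟨hfS, hf1, hf2⟩ := Finset.mem_filter.1 hf
            refine Finset.mem_erase.2 ⟨?_, hfS⟩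
            intro hfe
            subst hfe
            rcases hbend with h | h
            · exact hbJ (h ▸ hf1)
            · exact hbJ (h ▸ hf2)
          have hS₂sub : (S.filter fun f => tl f ∈ W \ J₁ ∧ hd f ∈ W \ J₁) ⊆ S.erase e := by
            intro f hf
            obtain ⟨hfS, hf1, hf2⟩ := Finset.mem_filter.1 hf
            refine Finset.mem_erase.2 ⟨?_, hfS⟩
            intro hfe
            subst hfe
            rcases haend with h | h
            · exact (Finset.mem_sdiff.1 (h ▸ hf1)).2 haJ
            · exact (Finset.mem_sdiff.1 (h ▸ hf2)).2 haJ
          have hc₁ : (S.filter fun f => tl f ∈ J₁ ∧ hd f ∈ J₁).card ≤ n := by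
            have := Finset.card_le_card hS₁sub
            omega
          have hc₂ : (S.filter fun f => tl f ∈ W \ J₁ ∧ hd f ∈ W \ J₁).card ≤ n := by
            have := Finset.card_le_card hS₂sub
            omega
          obtain ⟨T₁, hT₁⟩ := IH _ hc₁ J₁ _ hJne
            (fun f hf => (Finset.mem_filter.1 hf).2) hgen'.1 hgen'.2.2.1 hstab'.1
          obtain ⟨T₂, hT₂⟩ := IH _ hc₂ (W \ J₁) _ hWdne
            (fun f hf => (Finset.mem_filter.1 hf).2) hgen'.2.1 hgen'.2.2.2 hstab'.2
          exact ⟨insert e (T₁ ∪ T₂), TreeAssign.contract W S θ e a b he hloop hsmall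
            hab J₁ hJ₁ hall hmin T₁ T₂ hT₁ hT₂⟩
        rcases hone with ⟨ht, hh⟩ | ⟨hh, ht⟩
        · refine key (tl e) (hd e) (Or.inl ⟨rfl, rfl⟩) ht hh ?_
          intro J hJ
          have htJ : tl e ∈ J := same_endpoint hstab he hgen hsum hJ₁ hJ ht
          rcases one_endpoint hstab he hJ with ⟨h1, h2⟩ | ⟨_, h2⟩
          · exact ⟨h1, h2⟩
          · exact absurd htJ h2
        · refine key (hd e) (tl e) (Or.inr ⟨rfl, rfl⟩) hh ht ?_
          intro J hJ
          rcases one_endpoint hstab he hJ with ⟨h1, h2⟩ | ⟨h1, h2⟩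
          · exact absurd (same_endpoint hstab he hgen hsum hJ hJ₁ h1) ht
          · exact ⟨h1, h2⟩

lemma tree_unique {V E k : Type} [Fintype V] [LinearOrder E] [Zero k]
    {tl hd : E → V} {x xs : E → k} {W : Finset V} {S : Finset E} {θ : V → ℝ} {T : Finset E}
    (h1 : TreeAssign tl hd x xs W S θ T) :
    ∀ T', TreeAssign tl hd x xs W S θ T' →
      (∀ f ∈ S, tl f ∈ W ∧ hd f ∈ W) → GenericOn W θ → (∑ i ∈ W, θ i = 0) → T = T' := by
  induction h1 with
  | base W S θ hW =>
      intro T' h2 hEnd hgen hsum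
      cases h2 with
      | base => rfl
      | delete _ _ _ e he hloop hsmall hstab T'' ih =>
          exact absurd (card_one_loop hW (hEnd e he).1 (hEnd e he).2) hloop
      | contract _ _ _ e a b he hloop hsmall hab J₁ hJ₁ hall hmin T₁ T₂ ih₁ ih₂ =>
          exact absurd (card_one_loop hW (hEnd e he).1 (hEnd e he).2) hloop
  | delete W S θ e he hloop hsmall hstab T ih IH =>
      intro T' h2 hEnd hgen hsum
      cases h2 with
      | base _ _ _ hW =>
          exact absurd (card_one_loop hW (hEnd e he).1 (hEnd e he).2) hloop
      | delete _ _ _ e' he' hloop' hsmall' hstab' T'' ih' =>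
          have hee : e = e' := le_antisymm (hsmall e' he' hloop') (hsmall' e he hloop)
          subst hee
          exact IH T' ih' (fun f hf => hEnd f (Finset.mem_of_mem_erase hf)) hgen hsum
      | contract _ _ _ e' a b he' hloop' hsmall' hab J₁ hJ₁ hall hmin T₁ T₂ ih₁ ih₂ =>
          have hee : e = e' := le_antisymm (hsmall e' he' hloop') (hsmall' e he hloop)
          subst hee
          obtain ⟨hJW, hJne, hJneW, hJcl, hJsum⟩ := hJ₁
          have := hstab J₁ hJW hJcl hJne hJneW
          linarith
  | contract W S θ e a b he hloop hsmall hab J₁ hJ₁ hall hmin T₁ T₂ ih₁ ih₂ IH₁ IH₂ =>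
      intro T' h2 hEnd hgen hsum
      cases h2 with
      | base _ _ _ hW =>
          exact absurd (card_one_loop hW (hEnd e he).1 (hEnd e he).2) hloop
      | delete _ _ _ e' he' hloop' hsmall' hstab' T'' ih' =>
          have hee : e = e' := le_antisymm (hsmall e' he' hloop') (hsmall' e he hloop)
          subst hee
          obtain ⟨hJW, hJne, hJneW, hJcl, hJsum⟩ := hJ₁
          have := hstab' J₁ hJW hJcl hJne hJneW
          linarith
      | contract _ _ _ e' a' b' he' hloop' hsmall' hab' J₁' hJ₁' hall' hmin' T₁' T₂' ih₁' ih₂' =>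
          have hee : e = e' := le_antisymm (hsmall e' he' hloop') (hsmall' e he hloop)
          subst hee
          obtain ⟨haJ, hbJ⟩ := hall J₁ hJ₁
          obtain ⟨haJ', hbJ'⟩ := hall J₁' hJ₁'
          obtain ⟨ha'J, hb'J⟩ := hall' J₁ hJ₁
          obtain ⟨ha'J', hb'J'⟩ := hall' J₁' hJ₁'
          have haa : a = a' := by
            rcases hab with ⟨h1, h2⟩ | ⟨h1, h2⟩ <;> rcases hab' with ⟨h1', h2'⟩ | ⟨h1', h2'⟩
            · rw [h1, h1']
            · exfalso; apply hbJ; rw [h2, ← h1']; exact ha'J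
            · exfalso; apply hbJ; rw [h2, ← h1']; exact ha'J
            · rw [h1, h1']
          have hbb : b = b' := by
            rcases hab with ⟨h1, h2⟩ | ⟨h1, h2⟩ <;> rcases hab' with ⟨h1', h2'⟩ | ⟨h1', h2'⟩
            · rw [h2, h2']
            · exfalso; apply hb'J; rw [h2', ← h1]; exact haJ
            · exfalso; apply hb'J; rw [h2', ← h1]; exact haJ
            · rw [h2, h2']
          subst haa
          subst hbb
          have hbW : b ∈ W := by
            rcases hab with ⟨_, h2⟩ | ⟨_, h2⟩
            · rw [h2]; exact (hEnd e he).2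
            · rw [h2]; exact (hEnd e he).1
          have hJJ : J₁ = J₁' :=
            min_destab_unique hgen hbW hJ₁ hJ₁' haJ hbJ haJ' hbJ' hmin hmin'
          subst hJJ
          obtain ⟨hJW, hJne, hJneW, hJcl, hJsum⟩ := hJ₁
          have habne : a ≠ b := fun hEq => hbJ (hEq ▸ haJ)
          have hgen' := sub_generic hgen hsum hJW hJne hJneW haJ hbJ hbW habne
          have hTT₁ : T₁ = T₁' := IH₁ T₁' ih₁'
            (fun f hf => (Finset.mem_filter.1 hf).2) hgen'.1 hgen'.2.2.1
          have hTT₂ : T₂ = T₂' := IH₂ T₂' ih₂'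
            (fun f hf => (Finset.mem_filter.1 hf).2) hgen'.2.1 hgen'.2.2.2
          rw [hTT₁, hTT₂]

end S14Aux


/-- the tree-assignment recursion is well defined on `θ`-stable pairs and
produces a spanning tree `T`, with `x e ≠ 0` for `θ`-forward edges of `T` and
`xs e ≠ 0` for `θ`-backward edges of `T`. -/
theorem statement14 {V E : Type} [Fintype V] [Nonempty V] [Fintype E] [LinearOrder E]
    (tl hd : E → V) (hQ : IsConn tl hd Set.univ)
    (k : Type) [Field k]
    (θ : V → ℝ) (hgen : Generic θ) (hθ : ∑ i, θ i = 0)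
    (x xs : E → k)
    (hstab : StableSub tl hd θ x xs Finset.univ Set.univ) :
    (∃! T : Finset E, TreeAssign tl hd x xs Finset.univ Finset.univ θ T) ∧
    ∀ T : Finset E, TreeAssign tl hd x xs Finset.univ Finset.univ θ T →
      IsSpanningTree tl hd T ∧
      ∀ e ∈ T,
        ((0 < ∑ j ∈ component tl hd (T.erase e) (hd e), θ j) → x e ≠ 0) ∧
        (¬ (0 < ∑ j ∈ component tl hd (T.erase e) (hd e), θ j) → xs e ≠ 0) := by
  have hgenU : S14Aux.GenericOn (Finset.univ : Finset V) θ :=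
    fun J _ hne hneW => hgen J hne hneW
  have hEndU : ∀ f ∈ (Finset.univ : Finset E),
      tl f ∈ (Finset.univ : Finset V) ∧ hd f ∈ (Finset.univ : Finset V) :=
    fun f _ => ⟨Finset.mem_univ _, Finset.mem_univ _⟩
  have hsumU : ∑ i ∈ (Finset.univ : Finset V), θ i = 0 := hθ
  have hstabU : StableSub tl hd θ x xs Finset.univ ↑(Finset.univ : Finset E) := by
    rw [Finset.coe_univ]
    exact hstab
  obtain ⟨T₀, hT₀⟩ := S14Aux.exists_tree tl hd x xs (Finset.univ : Finset E).card
    Finset.univ le_rfl Finset.univ θ Finset.univ_nonempty hEndU hgenU hsumU hstabU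
  constructor
  · exact ⟨T₀, hT₀, fun T' hT' => S14Aux.tree_unique hT' T₀ hT₀ hEndU hgenU hsumU⟩
  · intro T hT
    obtain ⟨h1, h2, h3, h4⟩ := S14Aux.tree_props hT hEndU hgenU hsumU hstabU
    refine ⟨⟨fun u v => h3 u (Finset.mem_univ u) v (Finset.mem_univ v), ?_⟩, h4⟩
    rw [h2, Finset.card_univ]

end
end

section
/- Let Q be a connected quiver with a linear order on E, k a field, θ : V → ℝ generic with Σθ = 0, and λ : V → k with Σλ = 0. Let (x, x*) be a θ-stable pair satisfying the moment map equations with assigned spanning tree T = 𝑇(x, x*), let e be the largest non-loop edge of Q with e ∉ T, and let a be the smallest edge of the fundamental cycle C(T, e); assume a ≠ e (so a ∈ T). If the a-induced orientation on e is opposite to the orientation of e in Q, then x_e = 0; otherwise x*_e = 0. -/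
open Classical Finset

noncomputable section

section GraphLemmas

variable {V E : Type} {tl hd : E → V}

theorem aux_joined_rfl (D : Set E) (u : V) : joinedRel tl hd D u u :=
  Relation.EqvGen.refl u

theorem aux_joined_symm {D : Set E} {u v : V} (h : joinedRel tl hd D u v) :
    joinedRel tl hd D v u := Relation.EqvGen.symm u v h

theorem aux_joined_trans {D : Set E} {u v w : V} (h : joinedRel tl hd D u v)
    (h' : joinedRel tl hd D v w) : joinedRel tl hd D u w :=
  Relation.EqvGen.trans u v w h h'

theorem aux_joined_edge {D : Set E} {d : E} (hdD : d ∈ D) :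
    joinedRel tl hd D (tl d) (hd d) :=
  Relation.EqvGen.rel _ _ ⟨d, hdD, Or.inl ⟨rfl, rfl⟩⟩

theorem aux_joined_mono {D D' : Set E} (hDD : D ⊆ D') {u v : V}
    (h : joinedRel tl hd D u v) : joinedRel tl hd D' u v :=
  Relation.EqvGen.mono (by rintro a b ⟨e, he, ho⟩; exact ⟨e, hDD he, ho⟩) _ _ h

/-- If no edge of `D` crosses `A`, then `joinedRel` preserves membership in `A`. -/
theorem aux_joined_mem_iff {A : Set V} {D : Set E}
    (hA : ∀ d ∈ D, (tl d ∈ A ↔ hd d ∈ A)) {u v : V}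
    (h : joinedRel tl hd D u v) : u ∈ A ↔ v ∈ A := by
  induction h with
  | rel a b hr =>
    obtain ⟨d, hdD, ho⟩ := hr
    rcases ho with ⟨h1, h2⟩ | ⟨h1, h2⟩
    · rw [← h1, ← h2]; exact hA d hdD
    · rw [← h1, ← h2]; exact (hA d hdD).symm
  | refl a => exact Iff.rfl
  | symm a b _ ih => exact ih.symm
  | trans a b c _ _ ih1 ih2 => exact ih1.trans ih2

end GraphLemmas
theorem aux_joined_restrict' {V E : Type} {tl hd : E → V} {A : Set V} {D : Set E}
    (hA : ∀ d ∈ D, (tl d ∈ A ↔ hd d ∈ A)) {u v : V}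
    (h : joinedRel tl hd D u v) : u ∈ A →
    joinedRel tl hd {d ∈ D | tl d ∈ A} u v := by
  induction h with
  | rel a b hr =>
    intro ha
    obtain ⟨d, hdD, ho⟩ := hr
    refine Relation.EqvGen.rel _ _ ⟨d, ⟨hdD, ?_⟩, ho⟩
    rcases ho with ⟨h1, h2⟩ | ⟨h1, h2⟩
    · rwa [h1]
    · exact (hA d hdD).mpr (by rw [h2]; exact ha)
  | refl a => exact fun _ => Relation.EqvGen.refl a
  | symm a b h ih =>
    exact fun hb => Relation.EqvGen.symm _ _ (ih ((aux_joined_mem_iff hA h).mpr hb))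
  | trans a b c h1 h2 ih1 ih2 =>
    exact fun ha => Relation.EqvGen.trans _ _ _ (ih1 ha)
      (ih2 ((aux_joined_mem_iff hA h1).mp ha))
/-- Decomposition of connectivity after inserting a single edge. -/
theorem aux_joined_insert {V E : Type} {tl hd : E → V} {D : Set E} {e₀ : E} {u v : V}
    (h : joinedRel tl hd (insert e₀ D) u v) :
    joinedRel tl hd D u v ∨
    (joinedRel tl hd D u (tl e₀) ∧ joinedRel tl hd D (hd e₀) v) ∨
    (joinedRel tl hd D u (hd e₀) ∧ joinedRel tl hd D (tl e₀) v) := by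
  induction h with
  | rel a b hr =>
    obtain ⟨d, hdD, ho⟩ := hr
    rcases Set.mem_insert_iff.mp hdD with rfl | hdD
    · rcases ho with ⟨h1, h2⟩ | ⟨h1, h2⟩
      · exact Or.inr (Or.inl ⟨h1 ▸ Relation.EqvGen.refl _, h2 ▸ Relation.EqvGen.refl _⟩)
      · exact Or.inr (Or.inr ⟨h2 ▸ Relation.EqvGen.refl _, h1 ▸ Relation.EqvGen.refl _⟩)
    · exact Or.inl (Relation.EqvGen.rel _ _ ⟨d, hdD, ho⟩)
  | refl a => exact Or.inl (Relation.EqvGen.refl a)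
  | symm a b _ ih =>
    rcases ih with h | ⟨h1, h2⟩ | ⟨h1, h2⟩
    · exact Or.inl (aux_joined_symm h)
    · exact Or.inr (Or.inr ⟨aux_joined_symm h2, aux_joined_symm h1⟩)
    · exact Or.inr (Or.inl ⟨aux_joined_symm h2, aux_joined_symm h1⟩)
  | trans a b c _ _ ih1 ih2 =>
    rcases ih1 with h | ⟨h1, h2⟩ | ⟨h1, h2⟩ <;>
      rcases ih2 with g | ⟨g1, g2⟩ | ⟨g1, g2⟩
    · exact Or.inl (aux_joined_trans h g)
    · exact Or.inr (Or.inl ⟨aux_joined_trans h g1, g2⟩)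
    · exact Or.inr (Or.inr ⟨aux_joined_trans h g1, g2⟩)
    · exact Or.inr (Or.inl ⟨h1, aux_joined_trans h2 g⟩)
    · exact Or.inr (Or.inl ⟨h1, g2⟩)
    · exact Or.inl (aux_joined_trans h1 g2)
    · exact Or.inr (Or.inr ⟨h1, aux_joined_trans h2 g⟩)
    · exact Or.inl (aux_joined_trans h1 g2)
    · exact Or.inr (Or.inr ⟨h1, g2⟩)

theorem aux_mem_component {V E : Type} [Fintype V] {tl hd : E → V} {D : Finset E}
    {v w : V} : w ∈ component tl hd D v ↔ joinedRel tl hd ↑D v w := by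
  simp [component]
section TreeLemmas

variable {V E k : Type} [Fintype V] [LinearOrder E] [Zero k]
  {tl hd : E → V} {x xs : E → k}

/-- The assigned tree is contained in the edge set. -/
theorem aux_tsub {W : Finset V} {S : Finset E} {θ : V → ℝ} {T : Finset E}
    (h : TreeAssign tl hd x xs W S θ T) : T ⊆ S := by
  induction h with
  | base W S θ hW => exact Finset.empty_subset _
  | delete W S θ e he hloop hsmall hstab T ih IH =>
    exact IH.trans (Finset.erase_subset _ _)
  | contract W S θ e a b he hloop hsmall hab J₁ hJ₁ hall hmin T₁ T₂ ih₁ ih₂ IH₁ IH₂ =>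
    refine Finset.insert_subset he (Finset.union_subset ?_ ?_)
    · exact IH₁.trans (Finset.filter_subset _ _)
    · exact IH₂.trans (Finset.filter_subset _ _)

/-- Edges of the assigned tree are non-loops. -/
theorem aux_tnl {W : Finset V} {S : Finset E} {θ : V → ℝ} {T : Finset E}
    (h : TreeAssign tl hd x xs W S θ T) : ∀ f ∈ T, tl f ≠ hd f := by
  induction h with
  | base W S θ hW => intro f hf; exact absurd hf (Finset.notMem_empty f)
  | delete W S θ e he hloop hsmall hstab T ih IH => exact IH
  | contract W S θ e a b he hloop hsmall hab J₁ hJ₁ hall hmin T₁ T₂ ih₁ ih₂ IH₁ IH₂ =>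
    intro f hf
    rcases Finset.mem_insert.mp hf with rfl | hf
    · exact hloop
    · rcases Finset.mem_union.mp hf with hf | hf
      · exact IH₁ f hf
      · exact IH₂ f hf

/-- If all remaining edges are loops, the vertex set is a single vertex. -/
theorem aux_card1 {W : Finset V} {S : Finset E} {θ : V → ℝ} {T : Finset E}
    (h : TreeAssign tl hd x xs W S θ T) (hS : ∀ f ∈ S, tl f = hd f) : W.card = 1 := by
  cases h with
  | base W S θ hW => exact hW
  | delete W S θ e he hloop hsmall hstab T ih => exact absurd (hS e he) hloop
  | contract W S θ e a b he hloop hsmall hab J₁ hJ₁ hall hmin T₁ T₂ ih₁ ih₂ =>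
    exact absurd (hS e he) hloop

/-- The assigned tree connects all vertices of `W`. -/
theorem aux_span {W : Finset V} {S : Finset E} {θ : V → ℝ} {T : Finset E}
    (h : TreeAssign tl hd x xs W S θ T) :
    (∀ f ∈ S, tl f ∈ W ∧ hd f ∈ W) →
    ∀ u ∈ W, ∀ v ∈ W, joinedRel tl hd ↑T u v := by
  induction h with
  | base W S θ hW =>
    intro _ u hu v hv
    obtain ⟨c, hc⟩ := Finset.card_eq_one.mp hW
    rw [hc, Finset.mem_singleton] at hu hv
    rw [hu, hv]; exact aux_joined_rfl _ _
  | delete W S θ e he hloop hsmall hstab T ih IH =>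
    exact fun hSW => IH fun f hf => hSW f (Finset.mem_of_mem_erase hf)
  | contract W S θ e a b he hloop hsmall hab J₁ hJ₁ hall hmin T₁ T₂ ih₁ ih₂ IH₁ IH₂ =>
    intro hSW
    have ha : a ∈ J₁ := (hall J₁ hJ₁).1
    have hb : b ∉ J₁ := (hall J₁ hJ₁).2
    have hbW : b ∈ W := by
      rcases hab with ⟨_, rfl⟩ | ⟨_, rfl⟩
      · exact (hSW e he).2
      · exact (hSW e he).1
    have hT₁ : (↑T₁ : Set E) ⊆ ↑(insert e (T₁ ∪ T₂)) := by
      intro f hf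
      simp only [Finset.coe_insert, Finset.coe_union, Set.mem_insert_iff, Set.mem_union] at *
      exact Or.inr (Or.inl hf)
    have hT₂ : (↑T₂ : Set E) ⊆ ↑(insert e (T₁ ∪ T₂)) := by
      intro f hf
      simp only [Finset.coe_insert, Finset.coe_union, Set.mem_insert_iff, Set.mem_union] at *
      exact Or.inr (Or.inr hf)
    have hSW₁ : ∀ f ∈ S.filter fun f => tl f ∈ J₁ ∧ hd f ∈ J₁, tl f ∈ J₁ ∧ hd f ∈ J₁ :=
      fun f hf => (Finset.mem_filter.mp hf).2
    have hSW₂ : ∀ f ∈ S.filter fun f => tl f ∈ W \ J₁ ∧ hd f ∈ W \ J₁,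
        tl f ∈ W \ J₁ ∧ hd f ∈ W \ J₁ := fun f hf => (Finset.mem_filter.mp hf).2
    have heD : e ∈ (↑(insert e (T₁ ∪ T₂)) : Set E) := by
      simp
    have hedge : joinedRel tl hd ↑(insert e (T₁ ∪ T₂)) a b := by
      rcases hab with ⟨rfl, rfl⟩ | ⟨rfl, rfl⟩
      · exact aux_joined_edge heD
      · exact aux_joined_symm (aux_joined_edge heD)
    -- every vertex of W is joined to a
    have hkey : ∀ u ∈ W, joinedRel tl hd ↑(insert e (T₁ ∪ T₂)) u a := by
      intro u hu
      by_cases huJ : u ∈ J₁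
      · exact aux_joined_mono hT₁ (IH₁ hSW₁ u huJ a ha)
      · have h1 : joinedRel tl hd ↑T₂ u b :=
          IH₂ hSW₂ u (Finset.mem_sdiff.mpr ⟨hu, huJ⟩) b (Finset.mem_sdiff.mpr ⟨hbW, hb⟩)
        exact aux_joined_trans (aux_joined_mono hT₂ h1) (aux_joined_symm hedge)
    intro u hu v hv
    exact aux_joined_trans (hkey u hu) (aux_joined_symm (hkey v hv))

end TreeLemmas
section CrossLemmas

variable {V E : Type} [DecidableEq E] {tl hd : E → V}

/-- Convert a Finset non-crossing condition to a Set one. -/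
theorem aux_nc {J₁ : Finset V} {X : Finset E} (hX : ∀ d ∈ X, (tl d ∈ J₁ ↔ hd d ∈ J₁)) :
    ∀ d ∈ (↑X : Set E), (tl d ∈ (↑J₁ : Set V) ↔ hd d ∈ (↑J₁ : Set V)) := by
  intro d hdX
  simpa using hX d (Finset.mem_coe.mp hdX)

theorem aux_joined_mem_iff' {J₁ : Finset V} {X : Finset E}
    (hX : ∀ d ∈ X, (tl d ∈ J₁ ↔ hd d ∈ J₁)) {u v : V}
    (h : joinedRel tl hd ↑X u v) : u ∈ J₁ ↔ v ∈ J₁ := by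
  simpa using aux_joined_mem_iff (aux_nc hX) h

/-- Analysis of connectivity across the insertion of a single crossing edge. -/
theorem aux_cross {J₁ : Finset V} {X : Finset E} {e₀ : E} {a₀ b₀ : V}
    (hX : ∀ d ∈ X, (tl d ∈ J₁ ↔ hd d ∈ J₁))
    (hor : (tl e₀ = a₀ ∧ hd e₀ = b₀) ∨ (tl e₀ = b₀ ∧ hd e₀ = a₀))
    (ha₀ : a₀ ∈ J₁) (hb₀ : b₀ ∉ J₁) {u w : V} (hu : u ∈ J₁)
    (hj : joinedRel tl hd ↑(insert e₀ X) u w) :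
    (w ∈ J₁ ∧ joinedRel tl hd ↑X u w) ∨
    (w ∉ J₁ ∧ joinedRel tl hd ↑X u a₀ ∧ joinedRel tl hd ↑X b₀ w) := by
  rw [Finset.coe_insert] at hj
  rcases aux_joined_insert hj with h | ⟨hj1, hj2⟩ | ⟨hj1, hj2⟩
  · exact Or.inl ⟨(aux_joined_mem_iff' hX h).mp hu, h⟩
  · rcases hor with ⟨he1, he2⟩ | ⟨he1, he2⟩
    · rw [he1] at hj1; rw [he2] at hj2
      exact Or.inr ⟨fun hw => hb₀ ((aux_joined_mem_iff' hX hj2).mpr hw), hj1, hj2⟩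
    · rw [he1] at hj1
      exact absurd ((aux_joined_mem_iff' hX hj1).mp hu) hb₀
  · rcases hor with ⟨he1, he2⟩ | ⟨he1, he2⟩
    · rw [he2] at hj1
      exact absurd ((aux_joined_mem_iff' hX hj1).mp hu) hb₀
    · rw [he2] at hj1; rw [he1] at hj2
      exact Or.inr ⟨fun hw => hb₀ ((aux_joined_mem_iff' hX hj2).mpr hw), hj1, hj2⟩

/-- The complement-side version of `aux_cross`. -/
theorem aux_crossC {J₁ : Finset V} {X : Finset E} {e₀ : E} {a₀ b₀ : V}
    (hX : ∀ d ∈ X, (tl d ∈ J₁ ↔ hd d ∈ J₁))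
    (hor : (tl e₀ = a₀ ∧ hd e₀ = b₀) ∨ (tl e₀ = b₀ ∧ hd e₀ = a₀))
    (ha₀ : a₀ ∈ J₁) (hb₀ : b₀ ∉ J₁) {u w : V} (hu : u ∉ J₁)
    (hj : joinedRel tl hd ↑(insert e₀ X) u w) :
    (w ∉ J₁ ∧ joinedRel tl hd ↑X u w) ∨
    (w ∈ J₁ ∧ joinedRel tl hd ↑X u b₀ ∧ joinedRel tl hd ↑X a₀ w) := by
  rw [Finset.coe_insert] at hj
  rcases aux_joined_insert hj with h | ⟨hj1, hj2⟩ | ⟨hj1, hj2⟩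
  · exact Or.inl ⟨fun hw => hu ((aux_joined_mem_iff' hX h).mpr hw), h⟩
  · rcases hor with ⟨he1, he2⟩ | ⟨he1, he2⟩
    · rw [he1] at hj1
      exact absurd hu (fun h' => h' ((aux_joined_mem_iff' hX hj1).mpr ha₀))
    · rw [he1] at hj1; rw [he2] at hj2
      exact Or.inr ⟨(aux_joined_mem_iff' hX hj2).mp ha₀, hj1, hj2⟩
  · rcases hor with ⟨he1, he2⟩ | ⟨he1, he2⟩
    · rw [he2] at hj1; rw [he1] at hj2
      exact Or.inr ⟨(aux_joined_mem_iff' hX hj2).mp ha₀, hj1, hj2⟩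
    · rw [he2] at hj1
      exact absurd hu (fun h' => h' ((aux_joined_mem_iff' hX hj1).mpr ha₀))

/-- Restriction of a path between vertices of `J₁` to the edges inside `J₁`. -/
theorem aux_res {J₁ : Finset V} {Y Z : Finset E}
    (hY : ∀ d ∈ Y, tl d ∈ J₁ ∧ hd d ∈ J₁) (hZ : ∀ d ∈ Z, tl d ∉ J₁ ∧ hd d ∉ J₁)
    {u w : V} (hu : u ∈ J₁) (hj : joinedRel tl hd ↑(Y ∪ Z) u w) :
    joinedRel tl hd ↑Y u w := by
  have hnc : ∀ d ∈ Y ∪ Z, (tl d ∈ J₁ ↔ hd d ∈ J₁) := by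
    intro d hdm
    rcases Finset.mem_union.mp hdm with h' | h'
    · simp [(hY d h').1, (hY d h').2]
    · simp [(hZ d h').1, (hZ d h').2]
  have h := aux_joined_restrict' (aux_nc hnc) hj (Finset.mem_coe.mpr hu)
  refine aux_joined_mono ?_ h
  rintro d ⟨hdm, hdt⟩
  rcases Finset.mem_union.mp (Finset.mem_coe.mp hdm) with h' | h'
  · exact Finset.mem_coe.mpr h'
  · exact absurd (Finset.mem_coe.mp hdt) (hZ d h').1

/-- Components stay inside a side if no edge crosses it. -/
theorem aux_comp_subset [Fintype V] {A : Finset V} {D : Finset E}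
    (hD : ∀ d ∈ D, (tl d ∈ A ↔ hd d ∈ A)) {v : V} (hv : v ∈ A) :
    component tl hd D v ⊆ A := by
  intro w hw
  exact (aux_joined_mem_iff' hD (aux_mem_component.mp hw)).mp hv

end CrossLemmas
section GlueLemmas

variable {V E : Type} [Fintype V] [DecidableEq E] {tl hd : E → V}
  {W J₁ : Finset V} {T₁ T₂ : Finset E} {e₀ : E} {a₀ b₀ : V}

theorem aux_nc_mixed (hend₁ : ∀ f ∈ T₁, tl f ∈ J₁ ∧ hd f ∈ J₁)
    (hend₂ : ∀ f ∈ T₂, tl f ∈ W \ J₁ ∧ hd f ∈ W \ J₁) {Y Z : Finset E}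
    (hY : Y ⊆ T₁) (hZ : Z ⊆ T₂) :
    ∀ d ∈ Y ∪ Z, (tl d ∈ J₁ ↔ hd d ∈ J₁) := by
  intro d hdm
  rcases Finset.mem_union.mp hdm with h | h
  · simp [(hend₁ d (hY h)).1, (hend₁ d (hY h)).2]
  · simp [(Finset.mem_sdiff.mp (hend₂ d (hZ h)).1).2,
      (Finset.mem_sdiff.mp (hend₂ d (hZ h)).2).2]

theorem aux_nc_W (hend₁ : ∀ f ∈ T₁, tl f ∈ J₁ ∧ hd f ∈ J₁)
    (hend₂ : ∀ f ∈ T₂, tl f ∈ W \ J₁ ∧ hd f ∈ W \ J₁) (hJW : J₁ ⊆ W) {Y Z : Finset E}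
    (hY : Y ⊆ T₁) (hZ : Z ⊆ T₂) :
    ∀ d ∈ Y ∪ Z, (tl d ∈ W ↔ hd d ∈ W) := by
  intro d hdm
  rcases Finset.mem_union.mp hdm with h | h
  · simp [hJW (hend₁ d (hY h)).1, hJW (hend₁ d (hY h)).2]
  · simp [(Finset.mem_sdiff.mp (hend₂ d (hZ h)).1).1,
      (Finset.mem_sdiff.mp (hend₂ d (hZ h)).2).1]

/-- Component of a `J₁`-vertex after removing the tree edge `a ∈ T₁`. -/
theorem aux_comp_glue₁
    (hend₁ : ∀ f ∈ T₁, tl f ∈ J₁ ∧ hd f ∈ J₁)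
    (hend₂ : ∀ f ∈ T₂, tl f ∈ W \ J₁ ∧ hd f ∈ W \ J₁)
    (hor : (tl e₀ = a₀ ∧ hd e₀ = b₀) ∨ (tl e₀ = b₀ ∧ hd e₀ = a₀))
    (hJW : J₁ ⊆ W) (ha₀ : a₀ ∈ J₁) (hb₀ : b₀ ∉ J₁) (hb₀W : b₀ ∈ W)
    (hspan₂ : ∀ u ∈ W \ J₁, ∀ v ∈ W \ J₁, joinedRel tl hd ↑T₂ u v)
    {a : E} (haT₁ : a ∈ T₁) (he₀T₁ : e₀ ∉ T₁)
    {v : V} (hv : v ∈ J₁) :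
    component tl hd ((insert e₀ (T₁ ∪ T₂)).erase a) v =
      component tl hd (T₁.erase a) v ∪
        (if a₀ ∈ component tl hd (T₁.erase a) v then W \ J₁ else ∅) := by
  have haT₂ : a ∉ T₂ := fun h =>
    (Finset.mem_sdiff.mp (hend₂ a h).1).2 (hend₁ a haT₁).1
  have hae₀ : e₀ ≠ a := fun h => he₀T₁ (h ▸ haT₁)
  have herase : (insert e₀ (T₁ ∪ T₂)).erase a = insert e₀ ((T₁.erase a) ∪ T₂) := by
    rw [Finset.erase_insert_of_ne hae₀, Finset.erase_union_distrib,
      Finset.erase_eq_of_notMem haT₂]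
  have hX := aux_nc_mixed hend₁ hend₂ (Finset.erase_subset a T₁) (subset_refl T₂)
  have hXW := aux_nc_W hend₁ hend₂ hJW (Finset.erase_subset a T₁) (subset_refl T₂)
  have hY : ∀ d ∈ T₁.erase a, tl d ∈ J₁ ∧ hd d ∈ J₁ :=
    fun d h => hend₁ d (Finset.mem_of_mem_erase h)
  have hZ : ∀ d ∈ T₂, tl d ∉ J₁ ∧ hd d ∉ J₁ := fun d h =>
    ⟨(Finset.mem_sdiff.mp (hend₂ d h).1).2, (Finset.mem_sdiff.mp (hend₂ d h).2).2⟩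
  have hsub : (↑(T₁.erase a) : Set E) ⊆ ↑(insert e₀ ((T₁.erase a) ∪ T₂)) := by
    intro d hdm
    simp only [Finset.coe_insert, Finset.coe_union, Set.mem_insert_iff, Set.mem_union] at *
    exact Or.inr (Or.inl hdm)
  have hsub₂ : (↑T₂ : Set E) ⊆ ↑(insert e₀ ((T₁.erase a) ∪ T₂)) := by
    intro d hdm
    simp only [Finset.coe_insert, Finset.coe_union, Set.mem_insert_iff, Set.mem_union] at *
    exact Or.inr (Or.inr hdm)
  rw [herase]
  ext w
  constructor
  · intro hw
    have hj := aux_mem_component.mp hw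
    rcases aux_cross hX hor ha₀ hb₀ hv hj with ⟨hwJ, hjx⟩ | ⟨hwJ, hja, hjb⟩
    · exact Finset.mem_union_left _ (aux_mem_component.mpr (aux_res hY hZ hv hjx))
    · have ha₀K : a₀ ∈ component tl hd (T₁.erase a) v :=
        aux_mem_component.mpr (aux_res hY hZ hv hja)
      rw [if_pos ha₀K]
      exact Finset.mem_union_right _ (Finset.mem_sdiff.mpr
        ⟨(aux_joined_mem_iff' hXW hjb).mp hb₀W, hwJ⟩)
  · intro hw
    rcases Finset.mem_union.mp hw with hw | hw
    · exact aux_mem_component.mpr (aux_joined_mono hsub (aux_mem_component.mp hw))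
    · by_cases ha₀K : a₀ ∈ component tl hd (T₁.erase a) v
      · rw [if_pos ha₀K] at hw
        have h1 : joinedRel tl hd ↑(insert e₀ ((T₁.erase a) ∪ T₂)) v a₀ :=
          aux_joined_mono hsub (aux_mem_component.mp ha₀K)
        have he₀mem : e₀ ∈ (↑(insert e₀ ((T₁.erase a) ∪ T₂)) : Set E) := by simp
        have h2 : joinedRel tl hd ↑(insert e₀ ((T₁.erase a) ∪ T₂)) a₀ b₀ := by
          rcases hor with ⟨h1', h2'⟩ | ⟨h1', h2'⟩
          · rw [← h1', ← h2']; exact aux_joined_edge he₀mem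
          · rw [← h1', ← h2']; exact aux_joined_symm (aux_joined_edge he₀mem)
        have h3 : joinedRel tl hd ↑(insert e₀ ((T₁.erase a) ∪ T₂)) b₀ w :=
          aux_joined_mono hsub₂ (hspan₂ b₀ (Finset.mem_sdiff.mpr ⟨hb₀W, hb₀⟩) w hw)
        exact aux_mem_component.mpr (aux_joined_trans h1 (aux_joined_trans h2 h3))
      · rw [if_neg ha₀K] at hw
        exact absurd hw (Finset.notMem_empty w)

/-- Component of a complement-vertex after removing the tree edge `a ∈ T₂`. -/
theorem aux_comp_glue₂
    (hend₁ : ∀ f ∈ T₁, tl f ∈ J₁ ∧ hd f ∈ J₁)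
    (hend₂ : ∀ f ∈ T₂, tl f ∈ W \ J₁ ∧ hd f ∈ W \ J₁)
    (hor : (tl e₀ = a₀ ∧ hd e₀ = b₀) ∨ (tl e₀ = b₀ ∧ hd e₀ = a₀))
    (hJW : J₁ ⊆ W) (ha₀ : a₀ ∈ J₁) (hb₀ : b₀ ∉ J₁)
    (hspan₁ : ∀ u ∈ J₁, ∀ v ∈ J₁, joinedRel tl hd ↑T₁ u v)
    {a : E} (haT₂ : a ∈ T₂) (he₀T₂ : e₀ ∉ T₂)
    {v : V} (hv : v ∉ J₁) :
    component tl hd ((insert e₀ (T₁ ∪ T₂)).erase a) v =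
      component tl hd (T₂.erase a) v ∪
        (if b₀ ∈ component tl hd (T₂.erase a) v then J₁ else ∅) := by
  have haT₁ : a ∉ T₁ := fun h =>
    (Finset.mem_sdiff.mp (hend₂ a haT₂).1).2 (hend₁ a h).1
  have hae₀ : e₀ ≠ a := fun h => he₀T₂ (h ▸ haT₂)
  have herase : (insert e₀ (T₁ ∪ T₂)).erase a = insert e₀ (T₁ ∪ (T₂.erase a)) := by
    rw [Finset.erase_insert_of_ne hae₀, Finset.erase_union_distrib,
      Finset.erase_eq_of_notMem haT₁]
  have hX := aux_nc_mixed hend₁ hend₂ (subset_refl T₁) (Finset.erase_subset a T₂)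
  have hY : ∀ d ∈ T₂.erase a, tl d ∈ Finset.univ \ J₁ ∧ hd d ∈ Finset.univ \ J₁ := by
    intro d h
    have h' := hend₂ d (Finset.mem_of_mem_erase h)
    exact ⟨Finset.mem_sdiff.mpr ⟨Finset.mem_univ _, (Finset.mem_sdiff.mp h'.1).2⟩,
      Finset.mem_sdiff.mpr ⟨Finset.mem_univ _, (Finset.mem_sdiff.mp h'.2).2⟩⟩
  have hZ : ∀ d ∈ T₁, tl d ∉ Finset.univ \ J₁ ∧ hd d ∉ Finset.univ \ J₁ := by
    intro d h
    simp only [Finset.mem_sdiff, Finset.mem_univ, true_and, not_not]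
    exact hend₁ d h
  have hres : ∀ u w, u ∉ J₁ → joinedRel tl hd ↑(T₁ ∪ (T₂.erase a)) u w →
      joinedRel tl hd ↑(T₂.erase a) u w := by
    intro u w hu hj
    rw [Finset.union_comm] at hj
    exact aux_res hY hZ (Finset.mem_sdiff.mpr ⟨Finset.mem_univ _, hu⟩) hj
  have hsub : (↑(T₂.erase a) : Set E) ⊆ ↑(insert e₀ (T₁ ∪ (T₂.erase a))) := by
    intro d hdm
    simp only [Finset.coe_insert, Finset.coe_union, Set.mem_insert_iff, Set.mem_union] at *
    exact Or.inr (Or.inr hdm)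
  have hsub₁ : (↑T₁ : Set E) ⊆ ↑(insert e₀ (T₁ ∪ (T₂.erase a))) := by
    intro d hdm
    simp only [Finset.coe_insert, Finset.coe_union, Set.mem_insert_iff, Set.mem_union] at *
    exact Or.inr (Or.inl hdm)
  rw [herase]
  ext w
  constructor
  · intro hw
    have hj := aux_mem_component.mp hw
    rcases aux_crossC hX hor ha₀ hb₀ hv hj with ⟨hwJ, hjx⟩ | ⟨hwJ, hjb, hja⟩
    · exact Finset.mem_union_left _ (aux_mem_component.mpr (hres v w hv hjx))
    · have hb₀K : b₀ ∈ component tl hd (T₂.erase a) v :=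
        aux_mem_component.mpr (hres v b₀ hv hjb)
      rw [if_pos hb₀K]
      exact Finset.mem_union_right _ hwJ
  · intro hw
    rcases Finset.mem_union.mp hw with hw | hw
    · exact aux_mem_component.mpr (aux_joined_mono hsub (aux_mem_component.mp hw))
    · by_cases hb₀K : b₀ ∈ component tl hd (T₂.erase a) v
      · rw [if_pos hb₀K] at hw
        have h1 : joinedRel tl hd ↑(insert e₀ (T₁ ∪ (T₂.erase a))) v b₀ :=
          aux_joined_mono hsub (aux_mem_component.mp hb₀K)
        have he₀mem : e₀ ∈ (↑(insert e₀ (T₁ ∪ (T₂.erase a))) : Set E) := by simp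
        have h2 : joinedRel tl hd ↑(insert e₀ (T₁ ∪ (T₂.erase a))) b₀ a₀ := by
          rcases hor with ⟨h1', h2'⟩ | ⟨h1', h2'⟩
          · rw [← h1', ← h2']; exact aux_joined_symm (aux_joined_edge he₀mem)
          · rw [← h1', ← h2']; exact aux_joined_edge he₀mem
        have h3 : joinedRel tl hd ↑(insert e₀ (T₁ ∪ (T₂.erase a))) a₀ w :=
          aux_joined_mono hsub₁ (hspan₁ a₀ ha₀ w hw)
        exact aux_mem_component.mpr (aux_joined_trans h1 (aux_joined_trans h2 h3))
      · rw [if_neg hb₀K] at hw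
        exact absurd hw (Finset.notMem_empty w)

/-- Component of `a₀` in `T₁ ∪ T₂` is `J₁`. -/
theorem aux_comp_full₁
    (hend₁ : ∀ f ∈ T₁, tl f ∈ J₁ ∧ hd f ∈ J₁)
    (hend₂ : ∀ f ∈ T₂, tl f ∈ W \ J₁ ∧ hd f ∈ W \ J₁)
    (ha₀ : a₀ ∈ J₁)
    (hspan₁ : ∀ u ∈ J₁, ∀ v ∈ J₁, joinedRel tl hd ↑T₁ u v) :
    component tl hd (T₁ ∪ T₂) a₀ = J₁ := by
  have hX := aux_nc_mixed hend₁ hend₂ (subset_refl T₁) (subset_refl T₂)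
  apply Finset.Subset.antisymm (aux_comp_subset hX ha₀)
  intro w hw
  exact aux_mem_component.mpr (aux_joined_mono
    (by intro d hdm; simp only [Finset.coe_union, Set.mem_union]; exact Or.inl hdm)
    (hspan₁ a₀ ha₀ w hw))

/-- Component of `b₀` in `T₁ ∪ T₂` is `W \ J₁`. -/
theorem aux_comp_full₂
    (hend₁ : ∀ f ∈ T₁, tl f ∈ J₁ ∧ hd f ∈ J₁)
    (hend₂ : ∀ f ∈ T₂, tl f ∈ W \ J₁ ∧ hd f ∈ W \ J₁)
    (hJW : J₁ ⊆ W) (hb₀ : b₀ ∉ J₁) (hb₀W : b₀ ∈ W)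
    (hspan₂ : ∀ u ∈ W \ J₁, ∀ v ∈ W \ J₁, joinedRel tl hd ↑T₂ u v) :
    component tl hd (T₁ ∪ T₂) b₀ = W \ J₁ := by
  have hX : ∀ d ∈ T₁ ∪ T₂, (tl d ∈ W \ J₁ ↔ hd d ∈ W \ J₁) := by
    intro d hdm
    rcases Finset.mem_union.mp hdm with h | h
    · simp only [Finset.mem_sdiff]
      constructor
      · intro h'; exact absurd (hend₁ d h).1 h'.2
      · intro h'; exact absurd (hend₁ d h).2 h'.2
    · simp [(hend₂ d h).1, (hend₂ d h).2]
  apply Finset.Subset.antisymm (aux_comp_subset hX (Finset.mem_sdiff.mpr ⟨hb₀W, hb₀⟩))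
  intro w hw
  exact aux_mem_component.mpr (aux_joined_mono
    (by intro d hdm; simp only [Finset.coe_union, Set.mem_union]; exact Or.inr hdm)
    (hspan₂ b₀ (Finset.mem_sdiff.mpr ⟨hb₀W, hb₀⟩) w hw))

end GlueLemmas
theorem aux_sum_shift {V : Type} (θ : V → ℝ) (β : ℝ) (a₀ b₀ : V) (hne : a₀ ≠ b₀)
    (C : Finset V) :
    ∑ i ∈ C, (if i = a₀ then θ i - β else if i = b₀ then θ i + β else θ i)
      = ∑ i ∈ C, θ i + (if a₀ ∈ C then -β else 0) + (if b₀ ∈ C then β else 0) := by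
  have h : ∀ i, (if i = a₀ then θ i - β else if i = b₀ then θ i + β else θ i)
      = θ i + ((if i = a₀ then -β else 0) + (if i = b₀ then β else 0)) := by
    intro i
    by_cases h1 : i = a₀ <;> by_cases h2 : i = b₀
    · exact absurd (h1.symm.trans h2) hne
    · subst h1; rw [if_pos rfl, if_pos rfl, if_neg hne]; ring
    · subst h2; rw [if_neg h1, if_pos rfl, if_neg h1, if_pos rfl]; ring
    · rw [if_neg h1, if_neg h2, if_neg h1, if_neg h2]; ring
  rw [Finset.sum_congr rfl (fun i _ => h i), Finset.sum_add_distrib, Finset.sum_add_distrib,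
    Finset.sum_ite_eq' C a₀ (fun _ => -β), Finset.sum_ite_eq' C b₀ (fun _ => β)]
  by_cases h1 : a₀ ∈ C <;> by_cases h2 : b₀ ∈ C <;>
    simp [h1, h2]

/-- The condition determining which of `x e`, `xs e` vanishes. -/
def auxP {V E : Type} [Fintype V] (tl hd : E → V) (θ : V → ℝ) (T : Finset E)
    (a e : E) : Prop :=
  ((0 < ∑ j ∈ component tl hd (T.erase a) (hd a), θ j) ∧
      tl e ∈ component tl hd (T.erase a) (hd a)) ∨
    ((¬ (0 < ∑ j ∈ component tl hd (T.erase a) (hd a), θ j)) ∧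
      hd e ∈ component tl hd (T.erase a) (hd a))

theorem aux_main {V E k : Type} [Fintype V] [LinearOrder E] [Zero k]
    {tl hd : E → V} {x xs : E → k} {W : Finset V} {S : Finset E} {θ : V → ℝ}
    {T : Finset E} (hTA : TreeAssign tl hd x xs W S θ T) :
    (∀ f ∈ S, tl f ∈ W ∧ hd f ∈ W) → (∑ i ∈ W, θ i = 0) →
    (∀ J : Finset V, J ⊆ W → J.Nonempty → J ≠ W → ∑ i ∈ J, θ i ≠ 0) →
    ∀ e, e ∈ S → e ∉ T → tl e ≠ hd e → (∀ f ∈ S, tl f ≠ hd f → f ≤ e) →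
    ∀ a, a ∈ T → ¬ joinedRel tl hd ↑(T.erase a) (tl e) (hd e) →
    (∀ f ∈ T, ¬ joinedRel tl hd ↑(T.erase f) (tl e) (hd e) → a ≤ f) →
    (auxP tl hd θ T a e → xs e = 0) ∧ (¬ auxP tl hd θ T a e → x e = 0) := by
  induction hTA with
  | base W S θ hW =>
    intro _ _ _ e _ _ _ _ a haT _ _
    exact absurd haT (Finset.notMem_empty a)
  | delete W S θ f hf hloopf hsmallf hstabf T ihf IH =>
    intro hSW hsum hgen e heS heT hloope hemax a haT hanj hamin
    by_cases hef : e = f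
    · subst hef
      have hnl : ∀ g ∈ S.erase e, tl g = hd g := by
        intro g hg
        by_contra hgl
        have h1 := hemax g (Finset.mem_of_mem_erase hg) hgl
        have h2 := hsmallf g (Finset.mem_of_mem_erase hg) hgl
        exact (Finset.mem_erase.mp hg).1 (le_antisymm h1 h2)
      have hc := aux_card1 ihf hnl
      have h2 : 1 < W.card := Finset.one_lt_card.mpr
        ⟨tl e, (hSW e heS).1, hd e, (hSW e heS).2, hloope⟩
      omega
    · exact IH (fun g hg => hSW g (Finset.mem_of_mem_erase hg)) hsum hgen e
        (Finset.mem_erase.mpr ⟨hef, heS⟩) heT hloope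
        (fun g hg => hemax g (Finset.mem_of_mem_erase hg)) a haT hanj hamin
  | contract W S θ e₀ a₀ b₀ he₀ hloop₀ hsmall₀ hab J₁ hJ₁ hall hmin T₁ T₂ ih₁ ih₂ IH₁ IH₂ =>
    intro hSW hsum hgen e heS heT hloope hemax a haT hanj hamin
    set β := ∑ j ∈ J₁, θ j with hβdef
    set θ' : V → ℝ := fun i => if i = a₀ then θ i - β else if i = b₀ then θ i + β else θ i
      with hθ'def
    have hdes := hall J₁ hJ₁
    have ha₀ : a₀ ∈ J₁ := hdes.1
    have hb₀ : b₀ ∉ J₁ := hdes.2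
    obtain ⟨hJW, hJne, hJneW, hJcl, hJle⟩ := hJ₁
    have hor : (tl e₀ = a₀ ∧ hd e₀ = b₀) ∨ (tl e₀ = b₀ ∧ hd e₀ = a₀) := by
      rcases hab with ⟨hh1, hh2⟩ | ⟨hh1, hh2⟩
      · exact Or.inl ⟨hh1.symm, hh2.symm⟩
      · exact Or.inr ⟨hh2.symm, hh1.symm⟩
    have hb₀W : b₀ ∈ W := by
      rcases hor with ⟨hh1, hh2⟩ | ⟨hh1, hh2⟩
      · rw [← hh2]; exact (hSW e₀ he₀).2
      · rw [← hh1]; exact (hSW e₀ he₀).1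
    have ha₀b₀ : a₀ ≠ b₀ := fun h => hb₀ (h ▸ ha₀)
    have hβneg : β < 0 := lt_of_le_of_ne hJle (hgen J₁ hJW hJne hJneW)
    have hT₁S := aux_tsub ih₁
    have hT₂S := aux_tsub ih₂
    have hend₁ : ∀ f ∈ T₁, tl f ∈ J₁ ∧ hd f ∈ J₁ :=
      fun f hf => (Finset.mem_filter.mp (hT₁S hf)).2
    have hend₂ : ∀ f ∈ T₂, tl f ∈ W \ J₁ ∧ hd f ∈ W \ J₁ :=
      fun f hf => (Finset.mem_filter.mp (hT₂S hf)).2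
    have hT₁Sfull : T₁ ⊆ S := hT₁S.trans (Finset.filter_subset _ _)
    have hT₂Sfull : T₂ ⊆ S := hT₂S.trans (Finset.filter_subset _ _)
    have hdisjT : ∀ d, d ∈ T₁ → d ∈ T₂ → False := fun d h1 h2 =>
      (Finset.mem_sdiff.mp (hend₂ d h2).1).2 (hend₁ d h1).1
    have he₀T₁ : e₀ ∉ T₁ := by
      intro h
      rcases hor with ⟨hh1, hh2⟩ | ⟨hh1, hh2⟩
      · exact hb₀ (hh2 ▸ (hend₁ e₀ h).2)
      · exact hb₀ (hh1 ▸ (hend₁ e₀ h).1)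
    have he₀T₂ : e₀ ∉ T₂ := by
      intro h
      rcases hor with ⟨hh1, hh2⟩ | ⟨hh1, hh2⟩
      · exact (Finset.mem_sdiff.mp (hh1 ▸ (hend₂ e₀ h).1)).2 ha₀
      · exact (Finset.mem_sdiff.mp (hh2 ▸ (hend₂ e₀ h).2)).2 ha₀
    have hεe₀ : e ≠ e₀ := fun h => heT (h ▸ Finset.mem_insert_self e₀ (T₁ ∪ T₂))
    have hspan₁ : ∀ u ∈ J₁, ∀ v ∈ J₁, joinedRel tl hd ↑T₁ u v :=
      aux_span ih₁ (fun f hf => (Finset.mem_filter.mp hf).2)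
    have hspan₂ : ∀ u ∈ W \ J₁, ∀ v ∈ W \ J₁, joinedRel tl hd ↑T₂ u v :=
      aux_span ih₂ (fun f hf => (Finset.mem_filter.mp hf).2)
    have hXfull := aux_nc_mixed hend₁ hend₂ (subset_refl T₁) (subset_refl T₂)
    have he₀TT : e₀ ∉ T₁ ∪ T₂ := by
      simp only [Finset.mem_union]
      rintro (h | h)
      · exact he₀T₁ h
      · exact he₀T₂ h
    have hTer : (insert e₀ (T₁ ∪ T₂)).erase e₀ = T₁ ∪ T₂ := Finset.erase_insert he₀TT
    have hsum_comp : ∑ i ∈ W \ J₁, θ i = -β := by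
      have h := Finset.sum_sdiff (f := θ) hJW
      rw [hsum] at h
      linarith
    have hsum₁ : ∑ i ∈ J₁, θ' i = 0 := by
      rw [hθ'def, aux_sum_shift θ β a₀ b₀ ha₀b₀ J₁, if_pos ha₀, if_neg hb₀]
      simp [← hβdef]
    have hsum₂ : ∑ i ∈ W \ J₁, θ' i = 0 := by
      rw [hθ'def, aux_sum_shift θ β a₀ b₀ ha₀b₀ (W \ J₁),
        if_neg (fun h => (Finset.mem_sdiff.mp h).2 ha₀),
        if_pos (Finset.mem_sdiff.mpr ⟨hb₀W, hb₀⟩), hsum_comp]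
      ring
    have hgen₁ : ∀ J : Finset V, J ⊆ J₁ → J.Nonempty → J ≠ J₁ → ∑ i ∈ J, θ' i ≠ 0 := by
      intro J hJ hne hneq
      rw [hθ'def, aux_sum_shift θ β a₀ b₀ ha₀b₀ J, if_neg (fun h => hb₀ (hJ h)), add_zero]
      by_cases haJ : a₀ ∈ J
      · rw [if_pos haJ]
        have hdiff : ∑ i ∈ J₁ \ J, θ i + ∑ i ∈ J, θ i = β := Finset.sum_sdiff hJ
        have hne' : (J₁ \ J).Nonempty := Finset.sdiff_nonempty.mpr
          (fun h => hneq (Finset.Subset.antisymm hJ h))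
        have hneqW : J₁ \ J ≠ W := by
          intro h
          have hWJ : W ⊆ J₁ := by rw [← h]; exact Finset.sdiff_subset
          exact hJneW (Finset.Subset.antisymm hJW hWJ)
        have hg := hgen (J₁ \ J) (Finset.sdiff_subset.trans hJW) hne' hneqW
        intro h0
        exact hg (by linarith)
      · rw [if_neg haJ, add_zero]
        have hJneqW2 : J ≠ W := by
          intro h
          exact hJneW (Finset.Subset.antisymm hJW (by rw [← h]; exact hJ))
        exact hgen J (hJ.trans hJW) hne hJneqW2
    have hgen₂ : ∀ J : Finset V, J ⊆ W \ J₁ → J.Nonempty → J ≠ W \ J₁ →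
        ∑ i ∈ J, θ' i ≠ 0 := by
      intro J hJ hne hneq
      rw [hθ'def, aux_sum_shift θ β a₀ b₀ ha₀b₀ J,
        if_neg (fun h => (Finset.mem_sdiff.mp (hJ h)).2 ha₀), add_zero]
      by_cases hbJ : b₀ ∈ J
      · rw [if_pos hbJ]
        have hdisj : Disjoint J J₁ := by
          rw [Finset.disjoint_left]
          intro i hiJ hiJ₁
          exact (Finset.mem_sdiff.mp (hJ hiJ)).2 hiJ₁
        have hunion : ∑ i ∈ J ∪ J₁, θ i = ∑ i ∈ J, θ i + β := Finset.sum_union hdisj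
        have hne' : (J ∪ J₁).Nonempty := hne.mono Finset.subset_union_left
        have hsubW : J ∪ J₁ ⊆ W :=
          Finset.union_subset (hJ.trans Finset.sdiff_subset) hJW
        have hneqW' : J ∪ J₁ ≠ W := by
          intro h
          apply hneq
          apply Finset.Subset.antisymm hJ
          intro i hi
          obtain ⟨hiW, hiJ₁⟩ := Finset.mem_sdiff.mp hi
          have hiU : i ∈ J ∪ J₁ := by rw [h]; exact hiW
          rcases Finset.mem_union.mp hiU with h' | h'
          · exact h'
          · exact absurd h' hiJ₁
        intro h0
        exact hgen (J ∪ J₁) hsubW hne' hneqW' (by rw [hunion]; linarith)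
      · rw [if_neg hbJ, add_zero]
        have hJneqW2 : J ≠ W := by
          intro h
          have := hJ (by rw [h]; exact hJW ha₀)
          exact (Finset.mem_sdiff.mp this).2 ha₀
        exact hgen J (hJ.trans Finset.sdiff_subset) hne hJneqW2
    have hTsub : insert e₀ (T₁ ∪ T₂) ⊆ S :=
      Finset.insert_subset he₀ (Finset.union_subset hT₁Sfull hT₂Sfull)
    have htnl : ∀ f ∈ insert e₀ (T₁ ∪ T₂), tl f ≠ hd f := by
      intro f hfm
      rcases Finset.mem_insert.mp hfm with rfl | hfm
      · exact hloop₀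
      · rcases Finset.mem_union.mp hfm with h | h
        · exact aux_tnl ih₁ f h
        · exact aux_tnl ih₂ f h
    have hIE : (fun a b => propDecidable (a = b) : DecidableEq E)
        = (fun a b => LinearOrder.toDecidableEq a b : DecidableEq E) :=
      Subsingleton.elim _ _
    by_cases h1 : tl e ∈ J₁ <;> by_cases h2 : hd e ∈ J₁
    · -- both endpoints in J₁
      have hjoin₁ : joinedRel tl hd ↑T₁ (tl e) (hd e) := hspan₁ _ h1 _ h2
      have hae₀ : a ≠ e₀ := by
        rintro rfl
        apply hanj
        rw [hTer]
        exact aux_joined_mono (by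
          intro d hdm
          simp only [Finset.coe_union, Set.mem_union]
          exact Or.inl hdm) hjoin₁
      have hsubTT : ∀ f : E, (↑(T₁.erase f) : Set E) ⊆
          ↑((insert e₀ (T₁ ∪ T₂)).erase f) := by
        intro f d hdm
        have h' := Finset.mem_erase.mp (Finset.mem_coe.mp hdm)
        exact Finset.mem_coe.mpr (Finset.mem_erase.mpr
          ⟨h'.1, Finset.mem_insert.mpr (Or.inr (Finset.mem_union_left _ h'.2))⟩)
      have haT₂' : a ∉ T₂ := by
        intro h
        apply hanj
        refine aux_joined_mono ?_ hjoin₁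
        intro d hdm
        have hdT₁ : d ∈ T₁ := Finset.mem_coe.mp hdm
        exact Finset.mem_coe.mpr (Finset.mem_erase.mpr
          ⟨fun hda => hdisjT a (hda ▸ hdT₁) h,
            Finset.mem_insert.mpr (Or.inr (Finset.mem_union_left _ hdT₁))⟩)
      have haT₁ : a ∈ T₁ := by
        rcases Finset.mem_insert.mp haT with h | h
        · exact absurd h hae₀
        · rcases Finset.mem_union.mp h with h | h
          · exact h
          · exact absurd h haT₂'
      have hYe : ∀ f : E, ∀ d ∈ T₁.erase f, tl d ∈ J₁ ∧ hd d ∈ J₁ :=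
        fun f d h => hend₁ d (Finset.mem_of_mem_erase h)
      have hZ2 : ∀ d ∈ T₂, tl d ∉ J₁ ∧ hd d ∉ J₁ := fun d h =>
        ⟨(Finset.mem_sdiff.mp (hend₂ d h).1).2, (Finset.mem_sdiff.mp (hend₂ d h).2).2⟩
      have hanj₁ : ¬ joinedRel tl hd ↑(T₁.erase a) (tl e) (hd e) :=
        fun h => hanj (aux_joined_mono (hsubTT a) h)
      have hamin₁ : ∀ f ∈ T₁, ¬ joinedRel tl hd ↑(T₁.erase f) (tl e) (hd e) → a ≤ f := by
        intro f hfT₁ hnj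
        apply hamin f (Finset.mem_insert.mpr (Or.inr (Finset.mem_union_left _ hfT₁)))
        intro hj
        have hfe₀ : e₀ ≠ f := fun h => he₀T₁ (h ▸ hfT₁)
        have hfT₂ : f ∉ T₂ := fun h => hdisjT f hfT₁ h
        have herase : (insert e₀ (T₁ ∪ T₂)).erase f = insert e₀ ((T₁.erase f) ∪ T₂) := by
          rw [Finset.erase_insert_of_ne hfe₀, Finset.erase_union_distrib,
            Finset.erase_eq_of_notMem hfT₂]
        rw [herase] at hj
        have hX := aux_nc_mixed hend₁ hend₂ (Finset.erase_subset f T₁) (subset_refl T₂)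
        rcases aux_cross hX hor ha₀ hb₀ h1 hj with ⟨_, hjx⟩ | ⟨hwJ, _, _⟩
        · exact hnj (aux_res (hYe f) hZ2 h1 hjx)
        · exact hwJ h2
      have hres := IH₁ (fun f hfm => (Finset.mem_filter.mp hfm).2) hsum₁ hgen₁ e
        (Finset.mem_filter.mpr ⟨heS, h1, h2⟩)
        (fun h => heT (Finset.mem_insert.mpr (Or.inr (Finset.mem_union_left _ h))))
        hloope (fun f hfm hfl => hemax f (Finset.mem_filter.mp hfm).1 hfl) a haT₁ hanj₁ hamin₁
      have hglue := aux_comp_glue₁ hend₁ hend₂ hor hJW ha₀ hb₀ hb₀W hspan₂ haT₁ he₀T₁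
        ((hend₁ a haT₁).2)
      have hK₁J : component tl hd (T₁.erase a) (hd a) ⊆ J₁ := aux_comp_subset
        (fun d h => by
          have h' := hend₁ d (Finset.mem_of_mem_erase h)
          simp [h'.1, h'.2]) ((hend₁ a haT₁).2)
      have hb₀K : b₀ ∉ component tl hd (T₁.erase a) (hd a) := fun h => hb₀ (hK₁J h)
      have hdisjK : Disjoint (component tl hd (T₁.erase a) (hd a)) (W \ J₁) := by
        rw [Finset.disjoint_left]
        intro i hi hi'
        exact (Finset.mem_sdiff.mp hi').2 (hK₁J hi)
      have hsK : ∑ j ∈ component tl hd ((insert e₀ (T₁ ∪ T₂)).erase a) (hd a), θ j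
          = ∑ j ∈ component tl hd (T₁.erase a) (hd a), θ' j := by
        rw [hglue]
        simp only [hθ'def]
        rw [aux_sum_shift θ β a₀ b₀ ha₀b₀, if_neg hb₀K, add_zero]
        by_cases hK : a₀ ∈ component tl hd (T₁.erase a) (hd a)
        · rw [if_pos hK, if_pos hK, Finset.sum_union hdisjK, hsum_comp]
        · rw [if_neg hK, if_neg hK, Finset.union_empty, add_zero]
      have htlK : tl e ∈ component tl hd ((insert e₀ (T₁ ∪ T₂)).erase a) (hd a)
          ↔ tl e ∈ component tl hd (T₁.erase a) (hd a) := by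
        rw [hglue]
        constructor
        · intro hm
          rcases Finset.mem_union.mp hm with hm | hm
          · exact hm
          · exfalso
            by_cases hK : a₀ ∈ component tl hd (T₁.erase a) (hd a)
            · rw [if_pos hK] at hm
              exact (Finset.mem_sdiff.mp hm).2 h1
            · rw [if_neg hK] at hm
              exact Finset.notMem_empty _ hm
        · exact fun hm => Finset.mem_union_left _ hm
      have hhdK : hd e ∈ component tl hd ((insert e₀ (T₁ ∪ T₂)).erase a) (hd a)
          ↔ hd e ∈ component tl hd (T₁.erase a) (hd a) := by
        rw [hglue]
        constructor
        · intro hm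
          rcases Finset.mem_union.mp hm with hm | hm
          · exact hm
          · exfalso
            by_cases hK : a₀ ∈ component tl hd (T₁.erase a) (hd a)
            · rw [if_pos hK] at hm
              exact (Finset.mem_sdiff.mp hm).2 h2
            · rw [if_neg hK] at hm
              exact Finset.notMem_empty _ hm
        · exact fun hm => Finset.mem_union_left _ hm
      have hPiff : auxP tl hd θ (insert e₀ (T₁ ∪ T₂)) a e ↔ auxP tl hd θ' T₁ a e := by
        unfold auxP
        rw [hIE]
        rw [hsK, htlK, hhdK]
      exact ⟨fun h => hres.1 (hPiff.mp h), fun h => hres.2 (fun h' => h (hPiff.mpr h'))⟩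
    · -- tl e ∈ J₁, hd e ∉ J₁ : x e = 0
      have hclosed := hJcl e (Finset.mem_coe.mpr (Finset.mem_erase.mpr ⟨hεe₀, heS⟩))
      have hx0 : x e = 0 := by
        by_contra h
        exact h2 (hclosed.1 h h1)
      have hnj₀ : ¬ joinedRel tl hd ↑((insert e₀ (T₁ ∪ T₂)).erase e₀) (tl e) (hd e) := by
        rw [hTer]
        intro h
        exact h2 ((aux_joined_mem_iff' hXfull h).mp h1)
      have haeq : a = e₀ := le_antisymm (hamin e₀ (Finset.mem_insert_self _ _) hnj₀)
        (hsmall₀ a (hTsub haT) (htnl a haT))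
      subst haeq
      rcases hor with ⟨hA, hB⟩ | ⟨hA, hB⟩
      · have hK : component tl hd ((insert a (T₁ ∪ T₂)).erase a) (hd a) = W \ J₁ := by
          rw [hTer, hB]
          exact aux_comp_full₂ hend₁ hend₂ hJW hb₀ hb₀W hspan₂
        have hnP : ¬ auxP tl hd θ (insert a (T₁ ∪ T₂)) a e := by
          unfold auxP
          rw [hIE]
          rw [hK, hsum_comp]
          rintro (⟨_, hmem⟩ | ⟨hlt, _⟩)
          · exact (Finset.mem_sdiff.mp hmem).2 h1
          · exact hlt (by linarith)
        exact ⟨fun h => absurd h hnP, fun _ => hx0⟩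
      · have hK : component tl hd ((insert a (T₁ ∪ T₂)).erase a) (hd a) = J₁ := by
          rw [hTer, hB]
          exact aux_comp_full₁ hend₁ hend₂ ha₀ hspan₁
        have hnP : ¬ auxP tl hd θ (insert a (T₁ ∪ T₂)) a e := by
          unfold auxP
          rw [hIE]
          rw [hK, ← hβdef]
          rintro (⟨hlt, _⟩ | ⟨_, hmem⟩)
          · exact absurd hlt (by linarith)
          · exact h2 hmem
        exact ⟨fun h => absurd h hnP, fun _ => hx0⟩
    · -- tl e ∉ J₁, hd e ∈ J₁ : xs e = 0
      have hclosed := hJcl e (Finset.mem_coe.mpr (Finset.mem_erase.mpr ⟨hεe₀, heS⟩))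
      have hxs0 : xs e = 0 := by
        by_contra h
        exact h1 (hclosed.2 h h2)
      have hnj₀ : ¬ joinedRel tl hd ↑((insert e₀ (T₁ ∪ T₂)).erase e₀) (tl e) (hd e) := by
        rw [hTer]
        intro h
        exact h1 ((aux_joined_mem_iff' hXfull h).mpr h2)
      have haeq : a = e₀ := le_antisymm (hamin e₀ (Finset.mem_insert_self _ _) hnj₀)
        (hsmall₀ a (hTsub haT) (htnl a haT))
      subst haeq
      rcases hor with ⟨hA, hB⟩ | ⟨hA, hB⟩
      · have hK : component tl hd ((insert a (T₁ ∪ T₂)).erase a) (hd a) = W \ J₁ := by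
          rw [hTer, hB]
          exact aux_comp_full₂ hend₁ hend₂ hJW hb₀ hb₀W hspan₂
        have hP : auxP tl hd θ (insert a (T₁ ∪ T₂)) a e := by
          unfold auxP
          rw [hIE]
          rw [hK, hsum_comp]
          exact Or.inl ⟨by linarith, Finset.mem_sdiff.mpr ⟨(hSW e heS).1, h1⟩⟩
        exact ⟨fun _ => hxs0, fun h => absurd hP h⟩
      · have hK : component tl hd ((insert a (T₁ ∪ T₂)).erase a) (hd a) = J₁ := by
          rw [hTer, hB]
          exact aux_comp_full₁ hend₁ hend₂ ha₀ hspan₁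
        have hP : auxP tl hd θ (insert a (T₁ ∪ T₂)) a e := by
          unfold auxP
          rw [hIE]
          rw [hK, ← hβdef]
          exact Or.inr ⟨not_lt.mpr hβneg.le, h2⟩
        exact ⟨fun _ => hxs0, fun h => absurd hP h⟩
    · -- both endpoints outside J₁
      have htlW : tl e ∈ W := (hSW e heS).1
      have hhdW : hd e ∈ W := (hSW e heS).2
      have hjoin₂ : joinedRel tl hd ↑T₂ (tl e) (hd e) :=
        hspan₂ _ (Finset.mem_sdiff.mpr ⟨htlW, h1⟩) _ (Finset.mem_sdiff.mpr ⟨hhdW, h2⟩)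
      have hae₀ : a ≠ e₀ := by
        rintro rfl
        apply hanj
        rw [hTer]
        exact aux_joined_mono (by
          intro d hdm
          simp only [Finset.coe_union, Set.mem_union]
          exact Or.inr hdm) hjoin₂
      have hsubTT : ∀ f : E, (↑(T₂.erase f) : Set E) ⊆
          ↑((insert e₀ (T₁ ∪ T₂)).erase f) := by
        intro f d hdm
        have h' := Finset.mem_erase.mp (Finset.mem_coe.mp hdm)
        exact Finset.mem_coe.mpr (Finset.mem_erase.mpr
          ⟨h'.1, Finset.mem_insert.mpr (Or.inr (Finset.mem_union_right _ h'.2))⟩)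
      have haT₁' : a ∉ T₁ := by
        intro h
        apply hanj
        refine aux_joined_mono ?_ hjoin₂
        intro d hdm
        have hdT₂ : d ∈ T₂ := Finset.mem_coe.mp hdm
        exact Finset.mem_coe.mpr (Finset.mem_erase.mpr
          ⟨fun hda => hdisjT a h (hda ▸ hdT₂),
            Finset.mem_insert.mpr (Or.inr (Finset.mem_union_right _ hdT₂))⟩)
      have haT₂ : a ∈ T₂ := by
        rcases Finset.mem_insert.mp haT with h | h
        · exact absurd h hae₀
        · rcases Finset.mem_union.mp h with h | h
          · exact absurd h haT₁'
          · exact h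
      have hYe : ∀ f : E, ∀ d ∈ T₂.erase f,
          tl d ∈ Finset.univ \ J₁ ∧ hd d ∈ Finset.univ \ J₁ := by
        intro f d h
        have h' := hend₂ d (Finset.mem_of_mem_erase h)
        exact ⟨Finset.mem_sdiff.mpr ⟨Finset.mem_univ _, (Finset.mem_sdiff.mp h'.1).2⟩,
          Finset.mem_sdiff.mpr ⟨Finset.mem_univ _, (Finset.mem_sdiff.mp h'.2).2⟩⟩
      have hZ1 : ∀ d ∈ T₁, tl d ∉ Finset.univ \ J₁ ∧ hd d ∉ Finset.univ \ J₁ := by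
        intro d h
        simp only [Finset.mem_sdiff, Finset.mem_univ, true_and, not_not]
        exact hend₁ d h
      have hresC : ∀ f : E, ∀ u w, u ∉ J₁ →
          joinedRel tl hd ↑(T₁ ∪ T₂.erase f) u w → joinedRel tl hd ↑(T₂.erase f) u w := by
        intro f u w hu hj
        rw [Finset.union_comm T₁ (T₂.erase f)] at hj
        exact aux_res (hYe f) hZ1 (Finset.mem_sdiff.mpr ⟨Finset.mem_univ u, hu⟩) hj
      have hanj₂ : ¬ joinedRel tl hd ↑(T₂.erase a) (tl e) (hd e) :=
        fun h => hanj (aux_joined_mono (hsubTT a) h)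
      have hamin₂ : ∀ f ∈ T₂, ¬ joinedRel tl hd ↑(T₂.erase f) (tl e) (hd e) → a ≤ f := by
        intro f hfT₂ hnj
        apply hamin f (Finset.mem_insert.mpr (Or.inr (Finset.mem_union_right _ hfT₂)))
        intro hj
        have hfe₀ : e₀ ≠ f := fun h => he₀T₂ (h ▸ hfT₂)
        have hfT₁ : f ∉ T₁ := fun h => hdisjT f h hfT₂
        have herase : (insert e₀ (T₁ ∪ T₂)).erase f = insert e₀ (T₁ ∪ (T₂.erase f)) := by
          rw [Finset.erase_insert_of_ne hfe₀, Finset.erase_union_distrib,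
            Finset.erase_eq_of_notMem hfT₁]
        rw [herase] at hj
        have hX := aux_nc_mixed hend₁ hend₂ (subset_refl T₁) (Finset.erase_subset f T₂)
        rcases aux_crossC hX hor ha₀ hb₀ h1 hj with ⟨_, hjx⟩ | ⟨hwJ, _, _⟩
        · exact hnj (hresC f _ _ h1 hjx)
        · exact h2 hwJ
      have hres := IH₂ (fun f hfm => (Finset.mem_filter.mp hfm).2) hsum₂ hgen₂ e
        (Finset.mem_filter.mpr ⟨heS, Finset.mem_sdiff.mpr ⟨htlW, h1⟩,
          Finset.mem_sdiff.mpr ⟨hhdW, h2⟩⟩)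
        (fun h => heT (Finset.mem_insert.mpr (Or.inr (Finset.mem_union_right _ h))))
        hloope (fun f hfm hfl => hemax f (Finset.mem_filter.mp hfm).1 hfl) a haT₂ hanj₂ hamin₂
      have hhda : hd a ∈ W \ J₁ := (hend₂ a haT₂).2
      have hglue := aux_comp_glue₂ hend₁ hend₂ hor hJW ha₀ hb₀ hspan₁ haT₂ he₀T₂
        ((Finset.mem_sdiff.mp hhda).2)
      have hK₂C : component tl hd (T₂.erase a) (hd a) ⊆ W \ J₁ := aux_comp_subset
        (fun d h => by
          have h' := hend₂ d (Finset.mem_of_mem_erase h)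
          simp [h'.1, h'.2]) hhda
      have ha₀K : a₀ ∉ component tl hd (T₂.erase a) (hd a) := fun h =>
        (Finset.mem_sdiff.mp (hK₂C h)).2 ha₀
      have hdisjK : Disjoint (component tl hd (T₂.erase a) (hd a)) J₁ := by
        rw [Finset.disjoint_left]
        intro i hi hi'
        exact (Finset.mem_sdiff.mp (hK₂C hi)).2 hi'
      have hsK : ∑ j ∈ component tl hd ((insert e₀ (T₁ ∪ T₂)).erase a) (hd a), θ j
          = ∑ j ∈ component tl hd (T₂.erase a) (hd a), θ' j := by
        rw [hglue]
        simp only [hθ'def]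
        rw [aux_sum_shift θ β a₀ b₀ ha₀b₀, if_neg ha₀K, add_zero]
        by_cases hK : b₀ ∈ component tl hd (T₂.erase a) (hd a)
        · rw [if_pos hK, if_pos hK, Finset.sum_union hdisjK, ← hβdef]
        · rw [if_neg hK, if_neg hK, Finset.union_empty, add_zero]
      have htlK : tl e ∈ component tl hd ((insert e₀ (T₁ ∪ T₂)).erase a) (hd a)
          ↔ tl e ∈ component tl hd (T₂.erase a) (hd a) := by
        rw [hglue]
        constructor
        · intro hm
          rcases Finset.mem_union.mp hm with hm | hm
          · exact hm
          · exfalso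
            by_cases hK : b₀ ∈ component tl hd (T₂.erase a) (hd a)
            · rw [if_pos hK] at hm
              exact h1 hm
            · rw [if_neg hK] at hm
              exact Finset.notMem_empty _ hm
        · exact fun hm => Finset.mem_union_left _ hm
      have hhdK : hd e ∈ component tl hd ((insert e₀ (T₁ ∪ T₂)).erase a) (hd a)
          ↔ hd e ∈ component tl hd (T₂.erase a) (hd a) := by
        rw [hglue]
        constructor
        · intro hm
          rcases Finset.mem_union.mp hm with hm | hm
          · exact hm
          · exfalso
            by_cases hK : b₀ ∈ component tl hd (T₂.erase a) (hd a)
            · rw [if_pos hK] at hm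
              exact h2 hm
            · rw [if_neg hK] at hm
              exact Finset.notMem_empty _ hm
        · exact fun hm => Finset.mem_union_left _ hm
      have hPiff : auxP tl hd θ (insert e₀ (T₁ ∪ T₂)) a e ↔ auxP tl hd θ' T₂ a e := by
        unfold auxP
        rw [hIE]
        rw [hsK, htlK, hhdK]
      exact ⟨fun h => hres.1 (hPiff.mp h), fun h => hres.2 (fun h' => h (hPiff.mpr h'))⟩
/-- let `T` be the tree assigned to a stable pair `(x, xs)` satisfying the
moment map equations, `e` the largest non-loop edge with `e ∉ T`, and `a ≠ e` the
smallest edge of the fundamental cycle `C(T, e)`.  If the `a`-induced orientation on `e`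
is opposite to its orientation in `Q` then `x e = 0`, otherwise `xs e = 0`. -/
theorem statement19 {V E : Type} [Fintype V] [Nonempty V] [Fintype E] [LinearOrder E]
    (tl hd : E → V) (hQ : IsConn tl hd Set.univ)
    (k : Type) [Field k]
    (θ : V → ℝ) (hgen : Generic θ) (hθ : ∑ i, θ i = 0)
    (lam : V → k) (hlam : ∑ i, lam i = 0)
    (x xs : E → k)
    (hstab : StableSub tl hd θ x xs Finset.univ Set.univ)
    (hmm : MomentMap tl hd lam x xs)
    (T : Finset E) (hT : TreeAssign tl hd x xs Finset.univ Finset.univ θ T)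
    (e : E) (hloop : tl e ≠ hd e) (hmax : ∀ f : E, tl f ≠ hd f → f ≤ e) (heT : e ∉ T)
    (a : E)
    (haC : a ∈ insert e
      (T.filter fun f => ¬ joinedRel tl hd ↑(T.erase f) (tl e) (hd e)))
    (hamin : ∀ f ∈ insert e
      (T.filter fun f => ¬ joinedRel tl hd ↑(T.erase f) (tl e) (hd e)), a ≤ f)
    (hae : a ≠ e) :
    (((0 < ∑ j ∈ component tl hd (T.erase a) (hd a), θ j) ∧
        tl e ∈ component tl hd (T.erase a) (hd a)) ∨
      ((¬ (0 < ∑ j ∈ component tl hd (T.erase a) (hd a), θ j)) ∧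
        hd e ∈ component tl hd (T.erase a) (hd a)) →
      xs e = 0) ∧
    (¬ (((0 < ∑ j ∈ component tl hd (T.erase a) (hd a), θ j) ∧
        tl e ∈ component tl hd (T.erase a) (hd a)) ∨
      ((¬ (0 < ∑ j ∈ component tl hd (T.erase a) (hd a), θ j)) ∧
        hd e ∈ component tl hd (T.erase a) (hd a))) →
      x e = 0) := by
  have haT : a ∈ T ∧ ¬ joinedRel tl hd ↑(T.erase a) (tl e) (hd e) := by
    rcases Finset.mem_insert.mp haC with h | h
    · exact absurd h hae
    · exact ⟨(Finset.mem_filter.mp h).1, (Finset.mem_filter.mp h).2⟩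
  have hamin' : ∀ f ∈ T, ¬ joinedRel tl hd ↑(T.erase f) (tl e) (hd e) → a ≤ f :=
    fun f hf hnj => hamin f (Finset.mem_insert.mpr (Or.inr (Finset.mem_filter.mpr ⟨hf, hnj⟩)))
  have h := aux_main hT (fun f _ => ⟨Finset.mem_univ _, Finset.mem_univ _⟩) hθ
    (fun J _ hne hneq => hgen J hne hneq) e (Finset.mem_univ e) heT hloop
    (fun f _ hf => hmax f hf) a haT.1 haT.2 hamin'
  unfold auxP at h
  rw [show (fun a b => propDecidable (a = b) : DecidableEq E)
      = (fun a b => LinearOrder.toDecidableEq a b : DecidableEq E)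
    from Subsingleton.elim _ _] at h
  exact h

end
end
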